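/- arXiv:1803.08959 — 2 statements merged into one kernel-verified Lean document; each statement's English description precedes it below -/
import Mathlib

section
/- Let h_n(k, m, ℓ, j) denote the number of involutions π ∈ I_n(321, 4123) with cyc(π) = k, fix(π) = m, exc(π) = ℓ, and inv(π) = j, with the convention that h_m(·) = 0 whenever any index is negative (and h_0(0,0,0,0) = 1). Then for all n ≥ 5, h_n(k, m, ℓ, j) = h_{n-1}(k-1, m-1, ℓ, j) + h_{n-2}(k-1, m, ℓ-1, j-1) + h_{n-4}(k-2, m, ℓ-2, j-4). -/
open Equiv

/-- `π` contains the pattern whose one-line notation (relative order) is given by `σ`. -/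
def ContainsPat {n k : ℕ} (π : Perm (Fin n)) (σ : Fin k → ℕ) : Prop :=
  ∃ f : Fin k → Fin n, StrictMono f ∧ ∀ a b : Fin k, σ a < σ b ↔ π (f a) < π (f b)

/-- `π` avoids the pattern `σ`. -/
def AvoidsPat {n k : ℕ} (π : Perm (Fin n)) (σ : Fin k → ℕ) : Prop := ¬ ContainsPat π σ

/-- Number of cycles in the disjoint cycle decomposition, fixed points counted as cycles. -/
def cycCount {n : ℕ} (π : Perm (Fin n)) : ℕ :=
  π.cycleType.card + (Finset.univ.filter (fun x => π x = x)).card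

/-- Number of fixed points. -/
def fixCount {n : ℕ} (π : Perm (Fin n)) : ℕ :=
  (Finset.univ.filter (fun x => π x = x)).card

/-- Number of excedances. -/
def excCount {n : ℕ} (π : Perm (Fin n)) : ℕ :=
  (Finset.univ.filter (fun x => x < π x)).card

/-- Number of inversions. -/
def invCount {n : ℕ} (π : Perm (Fin n)) : ℕ :=
  (Finset.univ.filter (fun p : Fin n × Fin n => p.1 < p.2 ∧ π p.2 < π p.1)).card


/-- `h n k m l j` = number of involutions `π ∈ I_n(321, 4123)` with `cyc π = k`,
`fix π = m`, `exc π = l`, `inv π = j`. -/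
noncomputable def h (n k m l j : ℕ) : ℕ :=
  Nat.card {π : Perm (Fin n) // π = π⁻¹ ∧ AvoidsPat π ![3,2,1] ∧ AvoidsPat π ![4,1,2,3] ∧ cycCount π = k ∧
    fixCount π = m ∧ excCount π = l ∧ invCount π = j}

/-- The counts extended to integer indices, equal to `0` when any index is negative
(note `h 0 0 0 0 0 = 1`). -/
noncomputable def hZ (n k m l j : ℤ) : ℤ :=
  if 0 ≤ n ∧ 0 ≤ k ∧ 0 ≤ m ∧ 0 ≤ l ∧ 0 ≤ j then
    (h n.toNat k.toNat m.toNat l.toNat j.toNat : ℤ) else 0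

section SumPerm
variable {d m : ℕ}

def sumPerm (σ : Perm (Fin d)) (τ : Perm (Fin m)) : Perm (Fin (d + m)) :=
  Equiv.permCongr finSumFinEquiv (Equiv.sumCongr σ τ)

lemma sumPerm_castAdd (σ : Perm (Fin d)) (τ : Perm (Fin m)) (i : Fin d) :
    sumPerm σ τ (Fin.castAdd m i) = Fin.castAdd m (σ i) := by
  simp [sumPerm, Equiv.permCongr_apply, finSumFinEquiv_symm_apply_castAdd]

lemma sumPerm_natAdd (σ : Perm (Fin d)) (τ : Perm (Fin m)) (i : Fin m) :
    sumPerm σ τ (Fin.natAdd d i) = Fin.natAdd d (τ i) := by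
  simp [sumPerm, Equiv.permCongr_apply, finSumFinEquiv_symm_apply_natAdd]

lemma sumPerm_val_lt (σ : Perm (Fin d)) (τ : Perm (Fin m)) (x : Fin (d + m))
    (h : x.val < d) : (sumPerm σ τ x).val = (σ ⟨x.val, h⟩).val := by
  have hx : x = Fin.castAdd m ⟨x.val, h⟩ := by ext; simp
  conv_lhs => rw [hx, sumPerm_castAdd]
  simp

lemma sumPerm_val_ge (σ : Perm (Fin d)) (τ : Perm (Fin m)) (x : Fin (d + m))
    (h : d ≤ x.val) : (sumPerm σ τ x).val = d + (τ ⟨x.val - d, by omega⟩).val := by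
  have hx : x = Fin.natAdd d ⟨x.val - d, by omega⟩ := by ext; simp; omega
  conv_lhs => rw [hx, sumPerm_natAdd]
  simp

lemma fixCount_sumPerm (σ : Perm (Fin d)) (τ : Perm (Fin m)) :
    fixCount (sumPerm σ τ) = fixCount σ + fixCount τ := by
  classical
  unfold fixCount
  rw [Finset.card_filter, Finset.card_filter, Finset.card_filter, Fin.sum_univ_add]
  congr 1
  · refine Finset.sum_congr rfl fun i _ => ?_
    rw [sumPerm_castAdd]
    exact if_congr (by simp only [Fin.ext_iff, Fin.coe_castAdd, Fin.coe_natAdd] <;> omega) rfl rfl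
  · refine Finset.sum_congr rfl fun i _ => ?_
    rw [sumPerm_natAdd]
    exact if_congr (by simp only [Fin.ext_iff, Fin.coe_castAdd, Fin.coe_natAdd] <;> omega) rfl rfl

lemma excCount_sumPerm (σ : Perm (Fin d)) (τ : Perm (Fin m)) :
    excCount (sumPerm σ τ) = excCount σ + excCount τ := by
  classical
  unfold excCount
  rw [Finset.card_filter, Finset.card_filter, Finset.card_filter, Fin.sum_univ_add]
  congr 1
  · refine Finset.sum_congr rfl fun i _ => ?_
    rw [sumPerm_castAdd]
    exact if_congr (by simp only [Fin.lt_def, Fin.coe_castAdd, Fin.coe_natAdd] <;> omega) rfl rfl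
  · refine Finset.sum_congr rfl fun i _ => ?_
    rw [sumPerm_natAdd]
    exact if_congr (by simp only [Fin.lt_def, Fin.coe_castAdd, Fin.coe_natAdd] <;> omega) rfl rfl

lemma invCount_sumPerm (σ : Perm (Fin d)) (τ : Perm (Fin m)) :
    invCount (sumPerm σ τ) = invCount σ + invCount τ := by
  classical
  unfold invCount
  rw [Finset.card_filter, Finset.card_filter, Finset.card_filter]
  rw [Fintype.sum_prod_type, Fintype.sum_prod_type, Fintype.sum_prod_type]
  rw [Fin.sum_univ_add]
  congr 1
  · -- first coordinate in left block
    refine Finset.sum_congr rfl fun i _ => ?_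
    rw [Fin.sum_univ_add]
    have h2 : (∑ j : Fin m, if (Fin.castAdd m i < Fin.natAdd d j ∧
        sumPerm σ τ (Fin.natAdd d j) < sumPerm σ τ (Fin.castAdd m i)) then 1 else 0) = 0 := by
      refine Finset.sum_eq_zero fun j _ => ?_
      rw [if_neg]
      rintro ⟨-, hlt⟩
      rw [sumPerm_castAdd, sumPerm_natAdd, Fin.lt_def] at hlt
      simp only [Fin.coe_castAdd, Fin.coe_natAdd] at hlt
      have := (σ i).isLt
      omega
    rw [h2, add_zero]
    refine Finset.sum_congr rfl fun j _ => ?_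
    rw [sumPerm_castAdd, sumPerm_castAdd]
    exact if_congr (by simp only [Fin.lt_def, Fin.coe_castAdd, Fin.coe_natAdd] <;> omega) rfl rfl
  · refine Finset.sum_congr rfl fun i _ => ?_
    rw [Fin.sum_univ_add]
    have h1 : (∑ j : Fin d, if (Fin.natAdd d i < Fin.castAdd m j ∧
        sumPerm σ τ (Fin.castAdd m j) < sumPerm σ τ (Fin.natAdd d i)) then 1 else 0) = 0 := by
      refine Finset.sum_eq_zero fun j _ => ?_
      rw [if_neg]
      rintro ⟨hlt, -⟩
      rw [Fin.lt_def] at hlt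
      simp only [Fin.coe_castAdd, Fin.coe_natAdd] at hlt
      have := j.isLt
      omega
    rw [h1, zero_add]
    refine Finset.sum_congr rfl fun j _ => ?_
    rw [sumPerm_natAdd, sumPerm_natAdd]
    exact if_congr (by simp only [Fin.lt_def, Fin.coe_castAdd, Fin.coe_natAdd] <;> omega) rfl rfl

end SumPerm

section Invol
variable {n d m : ℕ}

lemma invol_iff (π : Perm (Fin n)) : π = π⁻¹ ↔ ∀ x, π (π x) = x := by
  constructor
  · intro h x
    nth_rewrite 1 [h]
    exact π.symm_apply_apply x
  · intro h
    ext x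
    have hx : π x = π⁻¹ x := by
      refine π.injective ?_
      rw [show π (π⁻¹ x) = x from π.apply_symm_apply x]
      exact h x
    exact congrArg Fin.val hx

lemma sumPerm_invol {σ : Perm (Fin d)} {τ : Perm (Fin m)} :
    sumPerm σ τ = (sumPerm σ τ)⁻¹ ↔ (σ = σ⁻¹ ∧ τ = τ⁻¹) := by
  rw [invol_iff, invol_iff, invol_iff]
  constructor
  · intro h
    constructor
    · intro i
      have := h (Fin.castAdd m i)
      rw [sumPerm_castAdd, sumPerm_castAdd] at this
      have hv : ((Fin.castAdd m (σ (σ i))) : Fin (d+m)).val = (Fin.castAdd m i : Fin (d+m)).val := by rw [this]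
      simp only [Fin.coe_castAdd] at hv
      exact Fin.ext hv
    · intro i
      have := h (Fin.natAdd d i)
      rw [sumPerm_natAdd, sumPerm_natAdd] at this
      have hv : ((Fin.natAdd d (τ (τ i))) : Fin (d+m)).val = (Fin.natAdd d i : Fin (d+m)).val := by rw [this]
      simp only [Fin.coe_natAdd] at hv
      exact Fin.ext (by omega)
  · rintro ⟨hσ, hτ⟩ x
    rcases lt_or_ge x.val d with hx | hx
    · have h1 : (sumPerm σ τ x).val = (σ ⟨x.val, hx⟩).val := sumPerm_val_lt σ τ x hx
      have h1' : (sumPerm σ τ x).val < d := h1 ▸ (σ ⟨x.val, hx⟩).isLt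
      have h2 : (sumPerm σ τ (sumPerm σ τ x)).val = (σ ⟨(sumPerm σ τ x).val, h1'⟩).val :=
        sumPerm_val_lt σ τ _ h1'
      apply Fin.ext
      rw [h2]
      have : (⟨(sumPerm σ τ x).val, h1'⟩ : Fin d) = σ ⟨x.val, hx⟩ := Fin.ext h1
      rw [this, hσ ⟨x.val, hx⟩]
    · have h1 : (sumPerm σ τ x).val = d + (τ ⟨x.val - d, by omega⟩).val := sumPerm_val_ge σ τ x hx
      have h1' : d ≤ (sumPerm σ τ x).val := by omega
      have h2 : (sumPerm σ τ (sumPerm σ τ x)).val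
          = d + (τ ⟨(sumPerm σ τ x).val - d, by omega⟩).val := sumPerm_val_ge σ τ _ h1'
      apply Fin.ext
      have k3 : (τ (⟨(sumPerm σ τ x).val - d, by omega⟩ : Fin m)).val
          = (τ (τ (⟨x.val - d, by omega⟩ : Fin m))).val := by
        congr 2
        apply Fin.ext
        simp only
        omega
      have k4 : (τ (τ (⟨x.val - d, by omega⟩ : Fin m))).val = x.val - d := by
        rw [hτ]
      omega

lemma containsPat_sumPerm_iff {k : ℕ} (hk : 0 < k) (p : Fin k → ℕ)
    (hp : ∀ a : Fin k, a ≠ ⟨0, hk⟩ → p a < p ⟨0, hk⟩)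
    (σ : Perm (Fin d)) (τ : Perm (Fin m)) :
    ContainsPat (sumPerm σ τ) p ↔ ContainsPat σ p ∨ ContainsPat τ p := by
  constructor
  · rintro ⟨f, hf, hiff⟩
    set z : Fin k := ⟨0, hk⟩
    rcases lt_or_ge (f z).val d with h0 | h0
    · -- all in left block
      left
      have hall : ∀ a, (f a).val < d := by
        intro a
        by_cases ha : a = z
        · rw [ha]; exact h0
        · have hlt : sumPerm σ τ (f a) < sumPerm σ τ (f z) := (hiff a z).mp (hp a ha)
          have hv0 : (sumPerm σ τ (f z)).val < d := by
            rw [sumPerm_val_lt σ τ _ h0]; exact (σ _).isLt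
          rw [Fin.lt_def] at hlt
          by_contra hge
          push_neg at hge
          rw [sumPerm_val_ge σ τ _ hge] at hlt
          omega
      refine ⟨fun a => ⟨(f a).val, hall a⟩, ?_, ?_⟩
      · intro a b hab
        have := hf hab
        rw [Fin.lt_def] at this ⊢
        exact this
      · intro a b
        rw [hiff a b, Fin.lt_def, Fin.lt_def,
          sumPerm_val_lt σ τ _ (hall a), sumPerm_val_lt σ τ _ (hall b)]
    · -- all in right block
      right
      have hall : ∀ a, d ≤ (f a).val := by
        intro a
        have : f z ≤ f a := hf.monotone (by exact Fin.mk_le_of_le_val (by omega))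
        rw [Fin.le_def] at this
        omega
      refine ⟨fun a => ⟨(f a).val - d, by have := (f a).isLt; omega⟩, ?_, ?_⟩
      · intro a b hab
        have h1 := hf hab
        rw [Fin.lt_def] at h1
        rw [Fin.mk_lt_mk]
        have := hall a
        omega
      · intro a b
        beta_reduce
        rw [hiff a b, Fin.lt_def, Fin.lt_def,
          sumPerm_val_ge σ τ _ (hall a), sumPerm_val_ge σ τ _ (hall b)]
        constructor
        · intro h'; omega
        · intro h'; omega
  · rintro (⟨f, hf, hiff⟩ | ⟨f, hf, hiff⟩)
    · refine ⟨fun a => Fin.castAdd m (f a), ?_, ?_⟩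
      · intro a b hab
        have := hf hab
        rw [Fin.lt_def] at this ⊢
        simpa using this
      · intro a b
        rw [hiff a b, sumPerm_castAdd, sumPerm_castAdd, Fin.lt_def, Fin.lt_def]
        simp
    · refine ⟨fun a => Fin.natAdd d (f a), ?_, ?_⟩
      · intro a b hab
        have := hf hab
        rw [Fin.lt_def] at this ⊢
        simp only [Fin.coe_natAdd]
        omega
      · intro a b
        rw [hiff a b, sumPerm_natAdd, sumPerm_natAdd, Fin.lt_def, Fin.lt_def]
        simp

lemma avoidsPat_sumPerm_iff {k : ℕ} (hk : 0 < k) (p : Fin k → ℕ)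
    (hp : ∀ a : Fin k, a ≠ ⟨0, hk⟩ → p a < p ⟨0, hk⟩)
    (σ : Perm (Fin d)) (τ : Perm (Fin m)) :
    AvoidsPat (sumPerm σ τ) p ↔ AvoidsPat σ p ∧ AvoidsPat τ p := by
  unfold AvoidsPat
  rw [containsPat_sumPerm_iff hk p hp]
  tauto

lemma hright_of_hleft (π : Perm (Fin (d + m)))
    (h : ∀ x : Fin (d + m), x.val < d → (π x).val < d) :
    ∀ y : Fin (d + m), d ≤ y.val → d ≤ (π y).val := by
  intro y hy
  by_contra hlt
  push_neg at hlt
  -- the map x ↦ π x restricted to left block is injective into left block, hence surjective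
  classical
  have hinj : Function.Injective (fun i : Fin d => (⟨(π (Fin.castAdd m i)).val, h _ (by simp)⟩ : Fin d)) := by
    intro i j hij
    have h0 : (π (Fin.castAdd m i)).val = (π (Fin.castAdd m j)).val := by
        have := congrArg Fin.val hij; exact this
    have h2 : π (Fin.castAdd m i) = π (Fin.castAdd m j) := Fin.ext h0
    have h3 := π.injective h2
    have h4 : (Fin.castAdd m i : Fin (d+m)).val = (Fin.castAdd m j : Fin (d+m)).val :=
      congrArg Fin.val h3
    simp only [Fin.coe_castAdd] at h4
    exact Fin.ext h4
  have hbij := Finite.injective_iff_bijective.mp hinj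
  obtain ⟨i, hi⟩ := hbij.2 ⟨(π y).val, hlt⟩
  have h0 : (π (Fin.castAdd m i)).val = (π y).val := by
    have := congrArg Fin.val hi; exact this
  have h2 : π (Fin.castAdd m i) = π y := Fin.ext h0
  have h3 := π.injective h2
  have h4 : (Fin.castAdd m i : Fin (d+m)).val = y.val := congrArg Fin.val h3
  simp only [Fin.coe_castAdd] at h4
  have := i.isLt
  omega

noncomputable def restrictLeft (π : Perm (Fin (d + m)))
    (h : ∀ x : Fin (d + m), x.val < d → (π x).val < d) : Perm (Fin d) :=
  Equiv.ofBijective (fun i : Fin d => (⟨(π (Fin.castAdd m i)).val, h _ (by simp)⟩ : Fin d))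
    (Finite.injective_iff_bijective.mp (by
      intro i j hij
      have h0 : (π (Fin.castAdd m i)).val = (π (Fin.castAdd m j)).val := by
        have := congrArg Fin.val hij; exact this
      have h2 : π (Fin.castAdd m i) = π (Fin.castAdd m j) := Fin.ext h0
      have h3 := π.injective h2
      have h4 : (Fin.castAdd m i : Fin (d+m)).val = (Fin.castAdd m j : Fin (d+m)).val :=
        congrArg Fin.val h3
      simp only [Fin.coe_castAdd] at h4
      exact Fin.ext h4))

lemma restrictLeft_val (π : Perm (Fin (d + m)))
    (h : ∀ x : Fin (d + m), x.val < d → (π x).val < d) (i : Fin d) :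
    (restrictLeft π h i).val = (π (Fin.castAdd m i)).val := rfl

noncomputable def restrictRight (π : Perm (Fin (d + m)))
    (h : ∀ x : Fin (d + m), x.val < d → (π x).val < d) : Perm (Fin m) :=
  Equiv.ofBijective (fun i : Fin m =>
      (⟨(π (Fin.natAdd d i)).val - d, by
        have h1 := hright_of_hleft π h (Fin.natAdd d i) (by simp)
        have h2 := (π (Fin.natAdd d i)).isLt
        omega⟩ : Fin m))
    (Finite.injective_iff_bijective.mp (by
      intro i j hij
      have h0 : (π (Fin.natAdd d i)).val - d = (π (Fin.natAdd d j)).val - d := by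
        have := congrArg Fin.val hij; exact this
      have e1 := hright_of_hleft π h (Fin.natAdd d i) (by simp)
      have e2 := hright_of_hleft π h (Fin.natAdd d j) (by simp)
      have h2 : π (Fin.natAdd d i) = π (Fin.natAdd d j) := Fin.ext (by omega)
      have h3 := π.injective h2
      have h4 : (Fin.natAdd d i : Fin (d+m)).val = (Fin.natAdd d j : Fin (d+m)).val :=
        congrArg Fin.val h3
      simp only [Fin.coe_natAdd] at h4
      exact Fin.ext (by omega)))

lemma restrictRight_val (π : Perm (Fin (d + m)))
    (h : ∀ x : Fin (d + m), x.val < d → (π x).val < d) (i : Fin m) :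
    (restrictRight π h i).val = (π (Fin.natAdd d i)).val - d := rfl

lemma eq_sumPerm_restrict (π : Perm (Fin (d + m)))
    (h : ∀ x : Fin (d + m), x.val < d → (π x).val < d) :
    π = sumPerm (restrictLeft π h) (restrictRight π h) := by
  ext x
  rcases lt_or_ge x.val d with hx | hx
  · rw [sumPerm_val_lt _ _ x hx, restrictLeft_val]
    have hxe : Fin.castAdd m (⟨x.val, hx⟩ : Fin d) = x := by ext; simp
    rw [hxe]
  · rw [sumPerm_val_ge _ _ x hx, restrictRight_val]
    have hxe : Fin.natAdd d (⟨x.val - d, by have := x.isLt; omega⟩ : Fin m) = x := by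
      ext; simp; omega
    rw [hxe]
    have := hright_of_hleft π h x hx
    omega

end Invol

section Counting
variable {n : ℕ}

lemma two_mul_cycCount (π : Perm (Fin n)) (h : π = π⁻¹) :
    2 * cycCount π = n + fixCount π := by
  have horder : π ^ 2 = 1 := by
    rw [pow_two]
    nth_rewrite 2 [h]
    group
  have hdvd : orderOf π ∣ 2 := orderOf_dvd_of_pow_eq_one horder
  have hparts : ∀ a ∈ π.cycleType, a = 2 := by
    intro a ha
    have h2 : 2 ≤ a := Equiv.Perm.two_le_of_mem_cycleType ha
    have hlcm : a ∣ π.cycleType.lcm := Multiset.dvd_lcm ha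
    rw [Equiv.Perm.lcm_cycleType] at hlcm
    have hd2 : a ∣ 2 := hlcm.trans hdvd
    have := Nat.le_of_dvd (by norm_num) hd2
    omega
  have hrep : π.cycleType = Multiset.replicate (Multiset.card π.cycleType) 2 :=
    Multiset.eq_replicate.mpr ⟨rfl, hparts⟩
  have hsum : π.cycleType.sum = Multiset.card π.cycleType * 2 := by
    conv_lhs => rw [hrep]
    rw [Multiset.sum_replicate]
    simp [mul_comm]
  have hsupp : π.cycleType.sum = π.support.card := Equiv.Perm.sum_cycleType π
  have hs : π.support = Finset.univ.filter (fun x => ¬ (π x = x)) := by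
    ext y; simp [Equiv.Perm.mem_support]
  have hsplit : (Finset.univ.filter (fun x => π x = x)).card
      + (Finset.univ.filter (fun x => ¬ (π x = x))).card = n := by
    classical
    rw [Finset.card_filter_add_card_filter_not]
    simp
  rw [hs] at hsupp
  unfold cycCount fixCount
  omega

lemma contains321 (π : Perm (Fin n)) {a b c : Fin n} (hab : a < b) (hbc : b < c)
    (h1 : π b < π a) (h2 : π c < π b) : ContainsPat π ![3,2,1] := by
  have hac := hab.trans hbc
  have v1 : (π b).val < (π a).val := h1
  have v2 : (π c).val < (π b).val := h2
  refine ⟨![a,b,c], ?_, ?_⟩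
  · intro x y hxy
    fin_cases x <;> fin_cases y <;>
      first
        | exact absurd hxy (by decide)
        | simpa using hab
        | simpa using hbc
        | simpa using hac
  · intro x y
    fin_cases x <;> fin_cases y <;> simp <;> (try rw [Fin.le_def]) <;> (try rw [Fin.lt_def]) <;>
      omega

lemma contains4123 (π : Perm (Fin n)) {a b c e : Fin n} (hab : a < b) (hbc : b < c)
    (hce : c < e) (h1 : π b < π c) (h2 : π c < π e) (h3 : π e < π a) :
    ContainsPat π ![4,1,2,3] := by
  have hac := hab.trans hbc
  have hae := hac.trans hce
  have hbe := hbc.trans hce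
  have v1 : (π b).val < (π c).val := h1
  have v2 : (π c).val < (π e).val := h2
  have v3 : (π e).val < (π a).val := h3
  refine ⟨![a,b,c,e], ?_, ?_⟩
  · intro x y hxy
    fin_cases x <;> fin_cases y <;>
      first
        | exact absurd hxy (by decide)
        | simpa using hab
        | simpa using hbc
        | simpa using hce
        | simpa using hac
        | simpa using hae
        | simpa using hbe
  · intro x y
    fin_cases x <;> fin_cases y <;> simp <;> (try rw [Fin.le_def]) <;> (try rw [Fin.lt_def]) <;>
      omega

lemma invol_apply {π : Perm (Fin n)} (h : π = π⁻¹) (x : Fin n) : π (π x) = x :=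
  (invol_iff π).mp h x

lemma claim1 (π : Perm (Fin n)) (h0 : 0 < n) (hi : π = π⁻¹)
    (h321 : AvoidsPat π ![3,2,1]) (h4123 : AvoidsPat π ![4,1,2,3]) :
    (π ⟨0, h0⟩).val ≤ 2 := by
  by_contra hc
  push_neg at hc
  have hinv := invol_apply hi
  have hcn : (π ⟨0, h0⟩).val < n := (π _).isLt
  have h1n : 1 < n := by omega
  have h2n : 2 < n := by omega
  have hπPc : π (π ⟨0, h0⟩) = ⟨0, h0⟩ := hinv _
  have hπq1 : π (π ⟨1, h1n⟩) = ⟨1, h1n⟩ := hinv _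
  have hπq2 : π (π ⟨2, h2n⟩) = ⟨2, h2n⟩ := hinv _
  have hq1pos : 0 < (π ⟨1, h1n⟩).val := by
    rcases Nat.eq_zero_or_pos (π ⟨1, h1n⟩).val with h | h
    · have he : π ⟨1, h1n⟩ = ⟨0, h0⟩ := Fin.ext h
      rw [he] at hπq1
      have := congrArg Fin.val hπq1
      simp at this
      omega
    · exact h
  have hq2pos : 0 < (π ⟨2, h2n⟩).val := by
    rcases Nat.eq_zero_or_pos (π ⟨2, h2n⟩).val with h | h
    · have he : π ⟨2, h2n⟩ = ⟨0, h0⟩ := Fin.ext h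
      rw [he] at hπq2
      have := congrArg Fin.val hπq2
      simp at this
      omega
    · exact h
  by_cases hA : π ⟨1, h1n⟩ < π ⟨0, h0⟩
  · refine h321 (contains321 π (a := ⟨0, h0⟩) (b := π ⟨1, h1n⟩) (c := π ⟨0, h0⟩) ?_ hA ?_ ?_)
    · rw [Fin.lt_def]; exact hq1pos
    · rw [hπq1, Fin.lt_def]; show (1:ℕ) < _; omega
    · rw [hπPc, hπq1, Fin.lt_def]; show (0:ℕ) < 1; norm_num
  by_cases hB : π ⟨2, h2n⟩ < π ⟨1, h1n⟩
  · refine h321 (contains321 π (a := ⟨0, h0⟩) (b := π ⟨2, h2n⟩) (c := π ⟨1, h1n⟩) ?_ hB ?_ ?_)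
    · rw [Fin.lt_def]; exact hq2pos
    · rw [hπq2, Fin.lt_def]; show (2:ℕ) < _; omega
    · rw [hπq1, hπq2, Fin.lt_def]; show (1:ℕ) < 2; norm_num
  have hne1 : π ⟨1, h1n⟩ ≠ π ⟨0, h0⟩ := by
    intro h
    have := π.injective h
    exact absurd (congrArg Fin.val this) (by simp)
  have hne2 : π ⟨1, h1n⟩ ≠ π ⟨2, h2n⟩ := by
    intro h
    have := π.injective h
    exact absurd (congrArg Fin.val this) (by simp)
  have hPcq1 : π ⟨0, h0⟩ < π ⟨1, h1n⟩ := lt_of_le_of_ne (not_lt.mp hA) (Ne.symm hne1)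
  have hq12 : π ⟨1, h1n⟩ < π ⟨2, h2n⟩ := lt_of_le_of_ne (not_lt.mp hB) hne2
  have h0Pc : (⟨0, h0⟩ : Fin n) < π ⟨0, h0⟩ := by rw [Fin.lt_def]; show (0:ℕ) < _; omega
  refine h4123 (contains4123 π h0Pc hPcq1 hq12 ?_ ?_ ?_)
  · rw [hπPc, hπq1, Fin.lt_def]; show (0:ℕ) < 1; norm_num
  · rw [hπq1, hπq2, Fin.lt_def]; show (1:ℕ) < 2; norm_num
  · rw [hπq2, Fin.lt_def]; show (2:ℕ) < _; omega

lemma claim2 (π : Perm (Fin n)) (h0 : 0 < n) (h1n : 1 < n) (hi : π = π⁻¹)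
    (h321 : AvoidsPat π ![3,2,1]) (h4123 : AvoidsPat π ![4,1,2,3])
    (hc : (π ⟨0, h0⟩).val = 2) : (π ⟨1, h1n⟩).val = 3 := by
  have hinv := invol_apply hi
  have h2n : 2 < n := by have := (π ⟨0, h0⟩).isLt; omega
  have hπ0 : π ⟨0, h0⟩ = ⟨2, h2n⟩ := Fin.ext hc
  have hπ2 : π ⟨2, h2n⟩ = ⟨0, h0⟩ := by rw [← hπ0]; exact hinv _
  have hπw : π (π ⟨1, h1n⟩) = ⟨1, h1n⟩ := hinv _
  have hwn : (π ⟨1, h1n⟩).val < n := (π _).isLt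
  have hp0 : (π ⟨1, h1n⟩).val ≠ 0 := by
    intro h
    have he : π ⟨1, h1n⟩ = ⟨0, h0⟩ := Fin.ext h
    rw [he, hπ0] at hπw
    exact absurd (congrArg Fin.val hπw) (by simp)
  have hp2 : (π ⟨1, h1n⟩).val ≠ 2 := by
    intro h
    have he : π ⟨1, h1n⟩ = ⟨2, h2n⟩ := Fin.ext h
    rw [he, hπ2] at hπw
    exact absurd (congrArg Fin.val hπw) (by simp)
  have hp1 : (π ⟨1, h1n⟩).val ≠ 1 := by
    intro h
    have hfix : π ⟨1, h1n⟩ = ⟨1, h1n⟩ := Fin.ext h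
    refine h321 (contains321 π (a := ⟨0, h0⟩) (b := ⟨1, h1n⟩) (c := ⟨2, h2n⟩) ?_ ?_ ?_ ?_)
    · rw [Fin.lt_def]; show (0:ℕ) < 1; norm_num
    · rw [Fin.lt_def]; show (1:ℕ) < 2; norm_num
    · rw [hfix, hπ0, Fin.lt_def]; show (1:ℕ) < 2; norm_num
    · rw [hπ2, hfix, Fin.lt_def]; show (0:ℕ) < 1; norm_num
  by_contra hne
  have hp4 : 4 ≤ (π ⟨1, h1n⟩).val := by omega
  have h3n : 3 < n := by omega
  have hπu : π (π ⟨3, h3n⟩) = ⟨3, h3n⟩ := hinv _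
  have hvn : (π ⟨3, h3n⟩).val < n := (π _).isLt
  have hv0 : (π ⟨3, h3n⟩).val ≠ 0 := by
    intro h
    have he : π ⟨3, h3n⟩ = ⟨0, h0⟩ := Fin.ext h
    rw [he, hπ0] at hπu
    exact absurd (congrArg Fin.val hπu) (by simp)
  have hv1' : (π ⟨3, h3n⟩).val ≠ 1 := by
    intro h
    have he : π ⟨3, h3n⟩ = ⟨1, h1n⟩ := Fin.ext h
    rw [he] at hπu
    have := congrArg Fin.val hπu
    simp at this
    omega
  have hv2 : (π ⟨3, h3n⟩).val ≠ 2 := by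
    intro h
    have he : π ⟨3, h3n⟩ = ⟨2, h2n⟩ := Fin.ext h
    rw [he, hπ2] at hπu
    exact absurd (congrArg Fin.val hπu) (by simp)
  have hvp : (π ⟨3, h3n⟩).val ≠ (π ⟨1, h1n⟩).val := by
    intro h
    have he : π ⟨3, h3n⟩ = π ⟨1, h1n⟩ := Fin.ext h
    have := π.injective he
    exact absurd (congrArg Fin.val this) (by simp)
  rcases Nat.lt_or_ge (π ⟨3, h3n⟩).val (π ⟨1, h1n⟩).val with hlt | hge
  · refine h321 (contains321 π (a := ⟨1, h1n⟩) (b := ⟨3, h3n⟩) (c := π ⟨1, h1n⟩) ?_ ?_ ?_ ?_)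
    · rw [Fin.lt_def]; show (1:ℕ) < 3; norm_num
    · rw [Fin.lt_def]; show (3:ℕ) < _; omega
    · rw [Fin.lt_def]; exact hlt
    · rw [hπw, Fin.lt_def]; show (1:ℕ) < _; omega
  · have hgt : (π ⟨1, h1n⟩).val < (π ⟨3, h3n⟩).val := by omega
    refine h4123 (contains4123 π (a := ⟨1, h1n⟩) (b := ⟨2, h2n⟩) (c := π ⟨1, h1n⟩)
      (e := π ⟨3, h3n⟩) ?_ ?_ ?_ ?_ ?_ ?_)
    · rw [Fin.lt_def]; show (1:ℕ) < 2; norm_num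
    · rw [Fin.lt_def]; show (2:ℕ) < _; omega
    · rw [Fin.lt_def]; exact hgt
    · rw [hπ2, hπw, Fin.lt_def]; show (0:ℕ) < 1; norm_num
    · rw [hπw, hπu, Fin.lt_def]; show (1:ℕ) < 3; norm_num
    · rw [hπu, Fin.lt_def]; show (3:ℕ) < _; omega

end Counting

set_option maxRecDepth 10000

instance decCP {n k : ℕ} (π : Perm (Fin n)) (p : Fin k → ℕ) : Decidable (ContainsPat π p) :=
  decidable_of_iff (∃ f : Fin k → Fin n, (∀ a b : Fin k, a < b → f a < f b) ∧
    ∀ a b : Fin k, p a < p b ↔ π (f a) < π (f b)) Iff.rfl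

instance decAP {n k : ℕ} (π : Perm (Fin n)) (p : Fin k → ℕ) : Decidable (AvoidsPat π p) :=
  decidable_of_iff (¬ ContainsPat π p) Iff.rfl

def c2 : Perm (Fin 2) := ⟨![1,0], ![1,0], by decide, by decide⟩
def c4 : Perm (Fin 4) := ⟨![2,3,0,1], ![2,3,0,1], by decide, by decide⟩

def RP (n M L J : ℕ) (π : Perm (Fin n)) : Prop :=
  π = π⁻¹ ∧ AvoidsPat π ![3,2,1] ∧ AvoidsPat π ![4,1,2,3] ∧
    fixCount π = M ∧ excCount π = L ∧ invCount π = J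

noncomputable def gg (n M L J : ℕ) : ℕ := Nat.card {π : Perm (Fin n) // RP n M L J π}

def StartsWith {d n : ℕ} (blk : Perm (Fin d)) (π : Perm (Fin n)) : Prop :=
  ∀ i : Fin d, ∀ hi : (i : ℕ) < n, (π ⟨i.val, hi⟩).val = (blk i).val

lemma hp3 : ∀ a : Fin 3, a ≠ ⟨0, by norm_num⟩ →
    (![3,2,1] : Fin 3 → ℕ) a < ![3,2,1] ⟨0, by norm_num⟩ := by decide

lemma hp4 : ∀ a : Fin 4, a ≠ ⟨0, by norm_num⟩ →
    (![4,1,2,3] : Fin 4 → ℕ) a < ![4,1,2,3] ⟨0, by norm_num⟩ := by decide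

lemma card_startsWith {d m : ℕ} (blk : Perm (Fin d)) (hbi : blk = blk⁻¹)
    (hb1 : AvoidsPat blk ![3,2,1]) (hb2 : AvoidsPat blk ![4,1,2,3]) (M L J : ℕ) :
    Nat.card {π : Perm (Fin (d + m)) //
        RP (d + m) (fixCount blk + M) (excCount blk + L) (invCount blk + J) π ∧ StartsWith blk π}
      = gg m M L J := by
  symm
  apply Nat.card_congr
  refine Equiv.ofBijective
    (fun t => ⟨sumPerm blk t.1, ⟨⟨?_, ?_, ?_, ?_, ?_, ?_⟩, ?_⟩⟩) ⟨?_, ?_⟩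
  · exact sumPerm_invol.mpr ⟨hbi, t.2.1⟩
  · exact (avoidsPat_sumPerm_iff (by norm_num) _ hp3 blk t.1).mpr ⟨hb1, t.2.2.1⟩
  · exact (avoidsPat_sumPerm_iff (by norm_num) _ hp4 blk t.1).mpr ⟨hb2, t.2.2.2.1⟩
  · rw [fixCount_sumPerm, t.2.2.2.2.1]
  · rw [excCount_sumPerm, t.2.2.2.2.2.1]
  · rw [invCount_sumPerm, t.2.2.2.2.2.2]
  · intro i hi
    have hx : (⟨(i : ℕ), hi⟩ : Fin (d + m)) = Fin.castAdd m i := Fin.ext (by simp)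
    rw [hx, sumPerm_castAdd]
    simp
  · -- injective
    intro t1 t2 he
    have he' : sumPerm blk t1.1 = sumPerm blk t2.1 := congrArg Subtype.val he
    apply Subtype.ext
    ext j
    have := congrArg (fun (ρ : Perm (Fin (d+m))) => (ρ (Fin.natAdd d j)).val) he'
    simp only [sumPerm_natAdd, Fin.coe_natAdd] at this
    omega
  · -- surjective
    rintro ⟨π, ⟨hR, hSW⟩⟩
    have hleft : ∀ x : Fin (d + m), x.val < d → (π x).val < d := by
      intro x hx
      have h1 := hSW ⟨x.val, hx⟩ x.isLt
      have hxx : (⟨((⟨x.val, hx⟩ : Fin d) : ℕ), x.isLt⟩ : Fin (d+m)) = x := Fin.ext rfl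
      rw [hxx] at h1
      rw [h1]
      exact (blk _).isLt
    have hdec := eq_sumPerm_restrict π hleft
    have hσ : restrictLeft π hleft = blk := by
      ext i
      rw [restrictLeft_val]
      have hci : (Fin.castAdd m i : Fin (d+m)) = ⟨(i : ℕ), by have := i.isLt; omega⟩ :=
        Fin.ext (by simp)
      rw [hci]
      exact hSW i _
    rw [hσ] at hdec
    have hAv1 : AvoidsPat (sumPerm blk (restrictRight π hleft)) ![3,2,1] := by
      rw [← hdec]; exact hR.2.1
    have hAv2 : AvoidsPat (sumPerm blk (restrictRight π hleft)) ![4,1,2,3] := by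
      rw [← hdec]; exact hR.2.2.1
    have hInv : sumPerm blk (restrictRight π hleft) = (sumPerm blk (restrictRight π hleft))⁻¹ := by
      rw [← hdec]; exact hR.1
    have hfix : fixCount blk + fixCount (restrictRight π hleft) = fixCount blk + M := by
      rw [← fixCount_sumPerm, ← hdec]; exact hR.2.2.2.1
    have hexc : excCount blk + excCount (restrictRight π hleft) = excCount blk + L := by
      rw [← excCount_sumPerm, ← hdec]; exact hR.2.2.2.2.1
    have hinv2 : invCount blk + invCount (restrictRight π hleft) = invCount blk + J := by
      rw [← invCount_sumPerm, ← hdec]; exact hR.2.2.2.2.2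
    refine ⟨⟨restrictRight π hleft, ?_, ?_, ?_, ?_, ?_, ?_⟩, ?_⟩
    · exact (sumPerm_invol.mp hInv).2
    · exact ((avoidsPat_sumPerm_iff (by norm_num) _ hp3 blk _).mp hAv1).2
    · exact ((avoidsPat_sumPerm_iff (by norm_num) _ hp4 blk _).mp hAv2).2
    · exact Nat.add_left_cancel hfix
    · exact Nat.add_left_cancel hexc
    · exact Nat.add_left_cancel hinv2
    · exact Subtype.ext hdec.symm

lemma caseA (n e M L J : ℕ) (hn : 0 < n) (he : n = 1 + e) :
    Nat.card {π : Perm (Fin n) // RP n M L J π ∧ (π ⟨0, hn⟩).val = 0}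
      = if 1 ≤ M then gg e (M - 1) L J else 0 := by
  subst he
  by_cases hM : 1 ≤ M
  · rw [if_pos hM]
    have hiff : ∀ π : Perm (Fin (1 + e)), RP (1+e) M L J π →
        ((π ⟨0, hn⟩).val = 0 ↔ StartsWith (1 : Perm (Fin 1)) π) := by
      intro π _
      constructor
      · intro h i hi
        have hi0 : i = ⟨0, by norm_num⟩ := by
          apply Fin.ext; have := i.isLt; omega
        subst hi0
        simp only [Equiv.Perm.coe_one, id_eq]
        exact h
      · intro hSW
        have := hSW ⟨0, by norm_num⟩ (by omega)
        simp only [Equiv.Perm.coe_one, id_eq] at this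
        exact this
    have hcongr : Nat.card {π : Perm (Fin (1+e)) // RP (1+e) M L J π ∧ (π ⟨0, hn⟩).val = 0}
        = Nat.card {π : Perm (Fin (1+e)) // RP (1+e) M L J π ∧ StartsWith (1 : Perm (Fin 1)) π} :=
      Nat.card_congr (Equiv.subtypeEquivRight (fun π => by
        constructor
        · rintro ⟨hR, hx⟩; exact ⟨hR, (hiff π hR).mp hx⟩
        · rintro ⟨hR, hx⟩; exact ⟨hR, (hiff π hR).mpr hx⟩))
    rw [hcongr]
    have hM' : M = fixCount (1 : Perm (Fin 1)) + (M - 1) := by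
      have : fixCount (1 : Perm (Fin 1)) = 1 := by decide
      omega
    have hL' : L = excCount (1 : Perm (Fin 1)) + L := by
      have : excCount (1 : Perm (Fin 1)) = 0 := by decide
      omega
    have hJ' : J = invCount (1 : Perm (Fin 1)) + J := by
      have : invCount (1 : Perm (Fin 1)) = 0 := by decide
      omega
    conv_lhs => rw [hM', hL', hJ']
    exact card_startsWith (1 : Perm (Fin 1)) (by simp) (by decide) (by decide) (M-1) L J
  · rw [if_neg hM]
    have : IsEmpty {π : Perm (Fin (1+e)) // RP (1+e) M L J π ∧ (π ⟨0, hn⟩).val = 0} := by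
      constructor
      rintro ⟨π, hR, hx⟩
      have hfix : π ⟨0, hn⟩ = ⟨0, hn⟩ := Fin.ext hx
      have hmem : (⟨0, hn⟩ : Fin (1+e)) ∈ Finset.univ.filter (fun x => π x = x) :=
        Finset.mem_filter.mpr ⟨Finset.mem_univ _, hfix⟩
      have : 0 < fixCount π := Finset.card_pos.mpr ⟨_, hmem⟩
      rw [hR.2.2.2.1] at this
      omega
    exact Nat.card_of_isEmpty

lemma caseB (n e M L J : ℕ) (hn : 0 < n) (he : n = 2 + e) :
    Nat.card {π : Perm (Fin n) // RP n M L J π ∧ (π ⟨0, hn⟩).val = 1}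
      = if 1 ≤ L ∧ 1 ≤ J then gg e M (L - 1) (J - 1) else 0 := by
  subst he
  have h1n : 1 < 2 + e := by omega
  have key : ∀ π : Perm (Fin (2 + e)), RP (2+e) M L J π → (π ⟨0, hn⟩).val = 1 →
      π ⟨0, hn⟩ = ⟨1, h1n⟩ ∧ π ⟨1, h1n⟩ = ⟨0, hn⟩ := by
    intro π hR hx
    have h1 : π ⟨0, hn⟩ = ⟨1, h1n⟩ := Fin.ext hx
    refine ⟨h1, ?_⟩
    rw [← h1]
    exact invol_apply hR.1 _
  by_cases hLJ : 1 ≤ L ∧ 1 ≤ J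
  · rw [if_pos hLJ]
    have hiff : ∀ π : Perm (Fin (2 + e)), RP (2+e) M L J π →
        ((π ⟨0, hn⟩).val = 1 ↔ StartsWith c2 π) := by
      intro π hR
      constructor
      · intro hx
        obtain ⟨h1, h2⟩ := key π hR hx
        intro i hi
        fin_cases i
        · show (π ⟨0, hi⟩).val = (c2 ⟨0, by norm_num⟩).val
          have : (c2 ⟨0, by norm_num⟩).val = 1 := by decide
          rw [this]; exact hx
        · show (π ⟨1, hi⟩).val = (c2 ⟨1, by norm_num⟩).val
          have : (c2 ⟨1, by norm_num⟩).val = 0 := by decide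
          rw [this]
          exact congrArg Fin.val h2
      · intro hSW
        have := hSW ⟨0, by norm_num⟩ (by omega)
        have hc : (c2 ⟨0, by norm_num⟩).val = 1 := by decide
        rw [hc] at this
        exact this
    have hcongr : Nat.card {π : Perm (Fin (2+e)) // RP (2+e) M L J π ∧ (π ⟨0, hn⟩).val = 1}
        = Nat.card {π : Perm (Fin (2+e)) // RP (2+e) M L J π ∧ StartsWith c2 π} :=
      Nat.card_congr (Equiv.subtypeEquivRight (fun π => by
        constructor
        · rintro ⟨hR, hx⟩; exact ⟨hR, (hiff π hR).mp hx⟩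
        · rintro ⟨hR, hx⟩; exact ⟨hR, (hiff π hR).mpr hx⟩))
    rw [hcongr]
    have hM' : M = fixCount c2 + M := by
      have : fixCount c2 = 0 := by decide
      omega
    have hL' : L = excCount c2 + (L - 1) := by
      have : excCount c2 = 1 := by decide
      omega
    have hJ' : J = invCount c2 + (J - 1) := by
      have : invCount c2 = 1 := by decide
      omega
    conv_lhs => rw [hM', hL', hJ']
    exact card_startsWith c2 (by decide) (by decide) (by decide) M (L-1) (J-1)
  · rw [if_neg hLJ]
    have : IsEmpty {π : Perm (Fin (2+e)) // RP (2+e) M L J π ∧ (π ⟨0, hn⟩).val = 1} := by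
      constructor
      rintro ⟨π, hR, hx⟩
      obtain ⟨h1, h2⟩ := key π hR hx
      have hexc : (⟨0, hn⟩ : Fin (2+e)) ∈ Finset.univ.filter (fun x => x < π x) := by
        refine Finset.mem_filter.mpr ⟨Finset.mem_univ _, ?_⟩
        rw [h1, Fin.lt_def]
        show (0:ℕ) < 1; norm_num
      have hL1 : 0 < excCount π := Finset.card_pos.mpr ⟨_, hexc⟩
      have hinvm : ((⟨0, hn⟩ : Fin (2+e)), (⟨1, h1n⟩ : Fin (2+e))) ∈
          Finset.univ.filter (fun p : Fin (2+e) × Fin (2+e) => p.1 < p.2 ∧ π p.2 < π p.1) := by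
        refine Finset.mem_filter.mpr ⟨Finset.mem_univ _, ?_, ?_⟩
        · rw [Fin.lt_def]; show (0:ℕ) < 1; norm_num
        · rw [h1, h2, Fin.lt_def]; show (0:ℕ) < 1; norm_num
      have hJ1 : 0 < invCount π := Finset.card_pos.mpr ⟨_, hinvm⟩
      rw [hR.2.2.2.2.1] at hL1
      rw [hR.2.2.2.2.2] at hJ1
      omega
    exact Nat.card_of_isEmpty

lemma caseC (n e M L J : ℕ) (hn : 0 < n) (he : n = 4 + e) :
    Nat.card {π : Perm (Fin n) // RP n M L J π ∧ (π ⟨0, hn⟩).val = 2}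
      = if 2 ≤ L ∧ 4 ≤ J then gg e M (L - 2) (J - 4) else 0 := by
  subst he
  have h1n : 1 < 4 + e := by omega
  have h2n : 2 < 4 + e := by omega
  have h3n : 3 < 4 + e := by omega
  have key : ∀ π : Perm (Fin (4 + e)), RP (4+e) M L J π → (π ⟨0, hn⟩).val = 2 →
      π ⟨0, hn⟩ = ⟨2, h2n⟩ ∧ π ⟨1, h1n⟩ = ⟨3, h3n⟩ ∧
        π ⟨2, h2n⟩ = ⟨0, hn⟩ ∧ π ⟨3, h3n⟩ = ⟨1, h1n⟩ := by
    intro π hR hx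
    have h1 : π ⟨0, hn⟩ = ⟨2, h2n⟩ := Fin.ext hx
    have hval1 : (π ⟨1, h1n⟩).val = 3 := claim2 π hn h1n hR.1 hR.2.1 hR.2.2.1 hx
    have h2 : π ⟨1, h1n⟩ = ⟨3, h3n⟩ := Fin.ext hval1
    have h3 : π ⟨2, h2n⟩ = ⟨0, hn⟩ := by rw [← h1]; exact invol_apply hR.1 _
    have h4 : π ⟨3, h3n⟩ = ⟨1, h1n⟩ := by rw [← h2]; exact invol_apply hR.1 _
    exact ⟨h1, h2, h3, h4⟩
  by_cases hLJ : 2 ≤ L ∧ 4 ≤ J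
  · rw [if_pos hLJ]
    have hiff : ∀ π : Perm (Fin (4 + e)), RP (4+e) M L J π →
        ((π ⟨0, hn⟩).val = 2 ↔ StartsWith c4 π) := by
      intro π hR
      constructor
      · intro hx
        obtain ⟨h1, h2, h3, h4⟩ := key π hR hx
        intro i hi
        fin_cases i
        · show (π ⟨0, hi⟩).val = (c4 ⟨0, by norm_num⟩).val
          have hc : (c4 ⟨0, by norm_num⟩).val = 2 := by decide
          rw [hc]; exact congrArg Fin.val h1
        · show (π ⟨1, hi⟩).val = (c4 ⟨1, by norm_num⟩).val
          have hc : (c4 ⟨1, by norm_num⟩).val = 3 := by decide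
          rw [hc]; exact congrArg Fin.val h2
        · show (π ⟨2, hi⟩).val = (c4 ⟨2, by norm_num⟩).val
          have hc : (c4 ⟨2, by norm_num⟩).val = 0 := by decide
          rw [hc]; exact congrArg Fin.val h3
        · show (π ⟨3, hi⟩).val = (c4 ⟨3, by norm_num⟩).val
          have hc : (c4 ⟨3, by norm_num⟩).val = 1 := by decide
          rw [hc]; exact congrArg Fin.val h4
      · intro hSW
        have := hSW ⟨0, by norm_num⟩ (by omega)
        have hc : (c4 ⟨0, by norm_num⟩).val = 2 := by decide
        rw [hc] at this
        exact this
    have hcongr : Nat.card {π : Perm (Fin (4+e)) // RP (4+e) M L J π ∧ (π ⟨0, hn⟩).val = 2}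
        = Nat.card {π : Perm (Fin (4+e)) // RP (4+e) M L J π ∧ StartsWith c4 π} :=
      Nat.card_congr (Equiv.subtypeEquivRight (fun π => by
        constructor
        · rintro ⟨hR, hx⟩; exact ⟨hR, (hiff π hR).mp hx⟩
        · rintro ⟨hR, hx⟩; exact ⟨hR, (hiff π hR).mpr hx⟩))
    rw [hcongr]
    have hM' : M = fixCount c4 + M := by
      have : fixCount c4 = 0 := by decide
      omega
    have hL' : L = excCount c4 + (L - 2) := by
      have : excCount c4 = 2 := by decide
      omega
    have hJ' : J = invCount c4 + (J - 4) := by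
      have : invCount c4 = 4 := by decide
      omega
    conv_lhs => rw [hM', hL', hJ']
    exact card_startsWith c4 (by decide) (by decide) (by decide) M (L-2) (J-4)
  · rw [if_neg hLJ]
    have : IsEmpty {π : Perm (Fin (4+e)) // RP (4+e) M L J π ∧ (π ⟨0, hn⟩).val = 2} := by
      constructor
      rintro ⟨π, hR, hx⟩
      obtain ⟨h1, h2, h3, h4⟩ := key π hR hx
      -- excedances at positions 0 and 1
      have hsub : ({⟨0, hn⟩, ⟨1, h1n⟩} : Finset (Fin (4+e)))
          ⊆ Finset.univ.filter (fun x => x < π x) := by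
        intro x hxm
        rcases Finset.mem_insert.mp hxm with hx0 | hx1
        · subst hx0
          refine Finset.mem_filter.mpr ⟨Finset.mem_univ _, ?_⟩
          rw [h1, Fin.lt_def]; show (0:ℕ) < 2; norm_num
        · rw [Finset.mem_singleton] at hx1
          subst hx1
          refine Finset.mem_filter.mpr ⟨Finset.mem_univ _, ?_⟩
          rw [h2, Fin.lt_def]; show (1:ℕ) < 3; norm_num
      have hc2 : ({⟨0, hn⟩, ⟨1, h1n⟩} : Finset (Fin (4+e))).card = 2 := by
        rw [Finset.card_insert_of_notMem, Finset.card_singleton]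
        rw [Finset.mem_singleton]
        intro hcon
        exact absurd (congrArg Fin.val hcon) (by simp)
      have hL2 : 2 ≤ excCount π := by
        rw [excCount]
        have := Finset.card_le_card hsub
        omega
      -- inversions
      have hsub4 : ({(⟨0, hn⟩, ⟨2, h2n⟩), (⟨0, hn⟩, ⟨3, h3n⟩), (⟨1, h1n⟩, ⟨2, h2n⟩),
            (⟨1, h1n⟩, ⟨3, h3n⟩)} : Finset (Fin (4+e) × Fin (4+e)))
          ⊆ Finset.univ.filter (fun p : Fin (4+e) × Fin (4+e) => p.1 < p.2 ∧ π p.2 < π p.1) := by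
        intro x hxm
        simp only [Finset.mem_insert, Finset.mem_singleton] at hxm
        rcases hxm with hx' | hx' | hx' | hx' <;> subst hx' <;>
          refine Finset.mem_filter.mpr ⟨Finset.mem_univ _, ?_, ?_⟩
        · rw [Fin.lt_def]; show (0:ℕ) < 2; norm_num
        · rw [h1, h3, Fin.lt_def]; show (0:ℕ) < 2; norm_num
        · rw [Fin.lt_def]; show (0:ℕ) < 3; norm_num
        · rw [h1, h4, Fin.lt_def]; show (1:ℕ) < 2; norm_num
        · rw [Fin.lt_def]; show (1:ℕ) < 2; norm_num
        · rw [h2, h3, Fin.lt_def]; show (0:ℕ) < 3; norm_num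
        · rw [Fin.lt_def]; show (1:ℕ) < 3; norm_num
        · rw [h2, h4, Fin.lt_def]; show (1:ℕ) < 3; norm_num
      have hc4' : ({(⟨0, hn⟩, ⟨2, h2n⟩), (⟨0, hn⟩, ⟨3, h3n⟩), (⟨1, h1n⟩, ⟨2, h2n⟩),
            (⟨1, h1n⟩, ⟨3, h3n⟩)} : Finset (Fin (4+e) × Fin (4+e))).card = 4 := by
        rw [Finset.card_insert_of_notMem, Finset.card_insert_of_notMem,
          Finset.card_insert_of_notMem, Finset.card_singleton]
        · rw [Finset.mem_singleton]
          intro hcon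
          exact absurd (congrArg (fun q => (Prod.snd q).val) hcon) (by simp)
        · simp only [Finset.mem_insert, Finset.mem_singleton]
          rintro (hcon | hcon)
          · exact absurd (congrArg (fun q => (Prod.fst q).val) hcon) (by simp)
          · exact absurd (congrArg (fun q => (Prod.fst q).val) hcon) (by simp)
        · simp only [Finset.mem_insert, Finset.mem_singleton]
          rintro (hcon | hcon | hcon)
          · exact absurd (congrArg (fun q => (Prod.snd q).val) hcon) (by simp)
          · exact absurd (congrArg (fun q => (Prod.fst q).val) hcon) (by simp)
          · exact absurd (congrArg (fun q => (Prod.fst q).val) hcon) (by simp)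
      have hJ4 : 4 ≤ invCount π := by
        rw [invCount]
        have := Finset.card_le_card hsub4
        omega
      rw [hR.2.2.2.2.1] at hL2
      rw [hR.2.2.2.2.2] at hJ4
      omega
    exact Nat.card_of_isEmpty

lemma partition (n M L J : ℕ) (hn : 5 ≤ n) (hn0 : 0 < n) :
    gg n M L J =
      Nat.card {π : Perm (Fin n) // RP n M L J π ∧ (π ⟨0, hn0⟩).val = 0}
      + Nat.card {π : Perm (Fin n) // RP n M L J π ∧ (π ⟨0, hn0⟩).val = 1}
      + Nat.card {π : Perm (Fin n) // RP n M L J π ∧ (π ⟨0, hn0⟩).val = 2} := by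
  have key : ∀ π : Perm (Fin n), RP n M L J π →
      (π ⟨0, hn0⟩).val = 0 ∨ (π ⟨0, hn0⟩).val = 1 ∨ (π ⟨0, hn0⟩).val = 2 := by
    intro π hR
    have := claim1 π hn0 hR.1 hR.2.1 hR.2.2.1
    omega
  have e : ({π : Perm (Fin n) // RP n M L J π ∧ (π ⟨0, hn0⟩).val = 0} ⊕
      ({π : Perm (Fin n) // RP n M L J π ∧ (π ⟨0, hn0⟩).val = 1} ⊕
       {π : Perm (Fin n) // RP n M L J π ∧ (π ⟨0, hn0⟩).val = 2}))
      ≃ {π : Perm (Fin n) // RP n M L J π} := by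
    refine Equiv.ofBijective (Sum.elim (fun x => ⟨x.1, x.2.1⟩)
      (Sum.elim (fun x => ⟨x.1, x.2.1⟩) (fun x => ⟨x.1, x.2.1⟩))) ⟨?_, ?_⟩
    · rintro (a | b | c) (a' | b' | c') hcon <;>
        simp only [Sum.elim_inl, Sum.elim_inr, Subtype.mk.injEq] at hcon
      · exact congrArg Sum.inl (Subtype.ext hcon)
      · exact absurd (hcon ▸ a.2.2) (by have := b'.2.2; omega)
      · exact absurd (hcon ▸ a.2.2) (by have := c'.2.2; omega)
      · exact absurd (hcon ▸ b.2.2) (by have := a'.2.2; omega)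
      · exact congrArg (Sum.inr ∘ Sum.inl) (Subtype.ext hcon)
      · exact absurd (hcon ▸ b.2.2) (by have := c'.2.2; omega)
      · exact absurd (hcon ▸ c.2.2) (by have := a'.2.2; omega)
      · exact absurd (hcon ▸ c.2.2) (by have := b'.2.2; omega)
      · exact congrArg (Sum.inr ∘ Sum.inr) (Subtype.ext hcon)
    · rintro ⟨π, hR⟩
      rcases key π hR with hx | hx | hx
      · exact ⟨Sum.inl ⟨π, hR, hx⟩, rfl⟩
      · exact ⟨Sum.inr (Sum.inl ⟨π, hR, hx⟩), rfl⟩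
      · exact ⟨Sum.inr (Sum.inr ⟨π, hR, hx⟩), rfl⟩
  rw [gg, ← Nat.card_congr e, Nat.card_sum, Nat.card_sum]
  omega

lemma gg_recur (n M L J : ℕ) (hn : 5 ≤ n) :
    gg n M L J = (if 1 ≤ M then gg (n-1) (M-1) L J else 0)
      + (if 1 ≤ L ∧ 1 ≤ J then gg (n-2) M (L-1) (J-1) else 0)
      + (if 2 ≤ L ∧ 4 ≤ J then gg (n-4) M (L-2) (J-4) else 0) := by
  have hn0 : 0 < n := by omega
  rw [partition n M L J hn hn0,
      caseA n (n-1) M L J hn0 (by omega),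
      caseB n (n-2) M L J hn0 (by omega),
      caseC n (n-4) M L J hn0 (by omega)]

lemma h_eq (n K M L J : ℕ) :
    h n K M L J = if 2 * K = n + M then gg n M L J else 0 := by
  by_cases hK : 2 * K = n + M
  · rw [if_pos hK, h, gg]
    apply Nat.card_congr
    apply Equiv.subtypeEquivRight
    intro π
    constructor
    · rintro ⟨h1, h2, h3, _, h5, h6, h7⟩
      exact ⟨h1, h2, h3, h5, h6, h7⟩
    · rintro ⟨h1, h2, h3, h5, h6, h7⟩
      refine ⟨h1, h2, h3, ?_, h5, h6, h7⟩
      have := two_mul_cycCount π h1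
      omega
  · rw [if_neg hK]
    have : IsEmpty {π : Perm (Fin n) // π = π⁻¹ ∧ AvoidsPat π ![3,2,1] ∧ AvoidsPat π ![4,1,2,3] ∧
        cycCount π = K ∧ fixCount π = M ∧ excCount π = L ∧ invCount π = J} := by
      constructor
      rintro ⟨π, h1, _, _, h4, h5, _, _⟩
      have := two_mul_cycCount π h1
      omega
    exact Nat.card_of_isEmpty

theorem statement18 (n : ℕ) (hn : 5 ≤ n) (k m l j : ℤ) :
    hZ n k m l j
      = hZ (n - 1) (k - 1) (m - 1) l j + hZ (n - 2) (k - 1) m (l - 1) (j - 1)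
        + hZ (n - 4) (k - 2) m (l - 2) (j - 4) := by
  by_cases hsign : 0 ≤ k ∧ 0 ≤ m ∧ 0 ≤ l ∧ 0 ≤ j
  · obtain ⟨hk, hm, hl, hj⟩ := hsign
    have hL : hZ n k m l j = (h n k.toNat m.toNat l.toNat j.toNat : ℤ) := by
      rw [hZ, if_pos ⟨Int.natCast_nonneg n, hk, hm, hl, hj⟩]
      congr 1
    have t1 : hZ ((n : ℤ) - 1) (k - 1) (m - 1) l j
        = if 1 ≤ k.toNat ∧ 1 ≤ m.toNat then
            (h (n-1) (k.toNat - 1) (m.toNat - 1) l.toNat j.toNat : ℤ) else 0 := by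
      by_cases hc : 1 ≤ k.toNat ∧ 1 ≤ m.toNat
      · rw [if_pos hc, hZ, if_pos ⟨by omega, by omega, by omega, hl, hj⟩]
        rw [show ((n:ℤ)-1).toNat = n - 1 by omega, show (k-1).toNat = k.toNat - 1 by omega,
          show (m-1).toNat = m.toNat - 1 by omega]
      · rw [hZ, if_neg ?_, if_neg hc]
        rintro ⟨-, h2, h3, -, -⟩
        exact hc ⟨by omega, by omega⟩
    have t2 : hZ ((n : ℤ) - 2) (k - 1) m (l - 1) (j - 1)
        = if 1 ≤ k.toNat ∧ 1 ≤ l.toNat ∧ 1 ≤ j.toNat then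
            (h (n-2) (k.toNat - 1) m.toNat (l.toNat - 1) (j.toNat - 1) : ℤ) else 0 := by
      by_cases hc : 1 ≤ k.toNat ∧ 1 ≤ l.toNat ∧ 1 ≤ j.toNat
      · rw [if_pos hc, hZ, if_pos ⟨by omega, by omega, hm, by omega, by omega⟩]
        rw [show ((n:ℤ)-2).toNat = n - 2 by omega, show (k-1).toNat = k.toNat - 1 by omega,
          show (l-1).toNat = l.toNat - 1 by omega, show (j-1).toNat = j.toNat - 1 by omega]
      · rw [hZ, if_neg ?_, if_neg hc]
        rintro ⟨-, h2, -, h4, h5⟩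
        exact hc ⟨by omega, by omega, by omega⟩
    have t3 : hZ ((n : ℤ) - 4) (k - 2) m (l - 2) (j - 4)
        = if 2 ≤ k.toNat ∧ 2 ≤ l.toNat ∧ 4 ≤ j.toNat then
            (h (n-4) (k.toNat - 2) m.toNat (l.toNat - 2) (j.toNat - 4) : ℤ) else 0 := by
      by_cases hc : 2 ≤ k.toNat ∧ 2 ≤ l.toNat ∧ 4 ≤ j.toNat
      · rw [if_pos hc, hZ, if_pos ⟨by omega, by omega, hm, by omega, by omega⟩]
        rw [show ((n:ℤ)-4).toNat = n - 4 by omega, show (k-2).toNat = k.toNat - 2 by omega,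
          show (l-2).toNat = l.toNat - 2 by omega, show (j-4).toNat = j.toNat - 4 by omega]
      · rw [hZ, if_neg ?_, if_neg hc]
        rintro ⟨-, h2, -, h4, h5⟩
        exact hc ⟨by omega, by omega, by omega⟩
    rw [hL, t1, t2, t3]
    by_cases hKM : 2 * k.toNat = n + m.toNat
    · have hK3 : 3 ≤ k.toNat := by omega
      rw [h_eq n k.toNat m.toNat l.toNat j.toNat, if_pos hKM,
        gg_recur n m.toNat l.toNat j.toNat hn]
      push_cast
      have A1 : ((if 1 ≤ m.toNat then gg (n-1) (m.toNat - 1) l.toNat j.toNat else 0 : ℕ) : ℤ)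
          = (if 1 ≤ k.toNat ∧ 1 ≤ m.toNat then
              ((h (n-1) (k.toNat - 1) (m.toNat - 1) l.toNat j.toNat : ℕ) : ℤ) else 0) := by
        by_cases hM : 1 ≤ m.toNat
        · rw [if_pos hM, if_pos ⟨by omega, hM⟩, h_eq, if_pos (by omega)]
        · rw [if_neg hM, if_neg (by tauto)]
          simp
      have A2 : ((if 1 ≤ l.toNat ∧ 1 ≤ j.toNat then
            gg (n-2) m.toNat (l.toNat - 1) (j.toNat - 1) else 0 : ℕ) : ℤ)
          = (if 1 ≤ k.toNat ∧ 1 ≤ l.toNat ∧ 1 ≤ j.toNat then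
              ((h (n-2) (k.toNat - 1) m.toNat (l.toNat - 1) (j.toNat - 1) : ℕ) : ℤ) else 0) := by
        by_cases hLJ : 1 ≤ l.toNat ∧ 1 ≤ j.toNat
        · rw [if_pos hLJ, if_pos ⟨by omega, hLJ.1, hLJ.2⟩, h_eq, if_pos (by omega)]
        · rw [if_neg hLJ, if_neg (by tauto)]
          simp
      have A3 : ((if 2 ≤ l.toNat ∧ 4 ≤ j.toNat then
            gg (n-4) m.toNat (l.toNat - 2) (j.toNat - 4) else 0 : ℕ) : ℤ)
          = (if 2 ≤ k.toNat ∧ 2 ≤ l.toNat ∧ 4 ≤ j.toNat then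
              ((h (n-4) (k.toNat - 2) m.toNat (l.toNat - 2) (j.toNat - 4) : ℕ) : ℤ) else 0) := by
        by_cases hLJ : 2 ≤ l.toNat ∧ 4 ≤ j.toNat
        · rw [if_pos hLJ, if_pos ⟨by omega, hLJ.1, hLJ.2⟩, h_eq, if_pos (by omega)]
        · rw [if_neg hLJ, if_neg (by tauto)]
          simp
      rw [← A1, ← A2, ← A3]
      push_cast
      ring
    · rw [h_eq n k.toNat m.toNat l.toNat j.toNat, if_neg hKM]
      have B1 : (if 1 ≤ k.toNat ∧ 1 ≤ m.toNat then
            ((h (n-1) (k.toNat - 1) (m.toNat - 1) l.toNat j.toNat : ℕ) : ℤ) else 0) = 0 := by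
        by_cases hc : 1 ≤ k.toNat ∧ 1 ≤ m.toNat
        · rw [if_pos hc, h_eq, if_neg (by omega)]
          simp
        · rw [if_neg hc]
      have B2 : (if 1 ≤ k.toNat ∧ 1 ≤ l.toNat ∧ 1 ≤ j.toNat then
            ((h (n-2) (k.toNat - 1) m.toNat (l.toNat - 1) (j.toNat - 1) : ℕ) : ℤ) else 0) = 0 := by
        by_cases hc : 1 ≤ k.toNat ∧ 1 ≤ l.toNat ∧ 1 ≤ j.toNat
        · rw [if_pos hc, h_eq, if_neg (by omega)]
          simp
        · rw [if_neg hc]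
      have B3 : (if 2 ≤ k.toNat ∧ 2 ≤ l.toNat ∧ 4 ≤ j.toNat then
            ((h (n-4) (k.toNat - 2) m.toNat (l.toNat - 2) (j.toNat - 4) : ℕ) : ℤ) else 0) = 0 := by
        by_cases hc : 2 ≤ k.toNat ∧ 2 ≤ l.toNat ∧ 4 ≤ j.toNat
        · rw [if_pos hc, h_eq, if_neg (by omega)]
          simp
        · rw [if_neg hc]
      rw [B1, B2, B3]
      simp
  · have e0 : hZ n k m l j = 0 := by
      rw [hZ, if_neg]
      rintro ⟨-, h2, h3, h4, h5⟩
      exact hsign ⟨h2, h3, h4, h5⟩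
    have e1 : hZ ((n : ℤ) - 1) (k - 1) (m - 1) l j = 0 := by
      rw [hZ, if_neg]
      rintro ⟨-, h2, h3, h4, h5⟩
      exact hsign ⟨by omega, by omega, h4, h5⟩
    have e2 : hZ ((n : ℤ) - 2) (k - 1) m (l - 1) (j - 1) = 0 := by
      rw [hZ, if_neg]
      rintro ⟨-, h2, h3, h4, h5⟩
      exact hsign ⟨by omega, h3, by omega, by omega⟩
    have e3 : hZ ((n : ℤ) - 4) (k - 2) m (l - 2) (j - 4) = 0 := by
      rw [hZ, if_neg]
      rintro ⟨-, h2, h3, h4, h5⟩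
      exact hsign ⟨by omega, h3, by omega, by omega⟩
    rw [e0, e1, e2, e3]
    ring
end

section
/- Let j_n = |I_n(321, 4123)| be the number of involutions in S_n avoiding 321 and 4123, with the convention j_0 = 1. Then for all n ≥ 5, j_n = j_{n-1} + j_{n-2} + j_{n-4} (with j_1 = 1, j_2 = 2, j_3 = 3, j_4 = 6). -/
open Equiv

/-- `j n` = number of involutions in `S_n` avoiding 321 and 4123. -/
noncomputable def j (n : ℕ) : ℕ :=
  Nat.card {π : Perm (Fin n) // π = π⁻¹ ∧ AvoidsPat π ![3,2,1] ∧ AvoidsPat π ![4,1,2,3]}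

/-! ### Auxiliary machinery -/

theorem Equiv.Perm.inv_apply_self {α : Type*} (f : Perm α) (x : α) : f⁻¹ (f x) = x :=
  f.symm_apply_apply x

theorem Equiv.Perm.apply_inv_self {α : Type*} (f : Perm α) (x : α) : f (f⁻¹ x) = x :=
  f.apply_symm_apply x

instance {n k : ℕ} (π : Perm (Fin n)) (σ : Fin k → ℕ) : Decidable (ContainsPat π σ) :=
  inferInstanceAs (Decidable (∃ f : Fin k → Fin n,
    (∀ ⦃a b : Fin k⦄, a < b → f a < f b) ∧ ∀ a b : Fin k, σ a < σ b ↔ π (f a) < π (f b)))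

instance {n k : ℕ} (π : Perm (Fin n)) (σ : Fin k → ℕ) : Decidable (AvoidsPat π σ) :=
  inferInstanceAs (Decidable ¬ _)

/-- The predicate defining our class. -/
def Pp {n : ℕ} (π : Perm (Fin n)) : Prop :=
  π = π⁻¹ ∧ AvoidsPat π ![3,2,1] ∧ AvoidsPat π ![4,1,2,3]

instance {n : ℕ} (π : Perm (Fin n)) : Decidable (Pp π) :=
  inferInstanceAs (Decidable (_ ∧ _ ∧ _))

set_option maxRecDepth 40000 in
lemma jeq (n : ℕ) : j n = (Finset.univ.filter (fun π : Perm (Fin n) => Pp π)).card := by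
  rw [j, Nat.card_eq_fintype_card, Fintype.card_subtype]
  apply Finset.card_nbij (fun x => x) <;>
    simp [Set.InjOn, Set.SurjOn, Set.MapsTo, Pp, Set.subset_def]
  · exact fun x h1 h2 h3 => Finset.mem_filter.2 ⟨Finset.mem_univ _, h1, h2, h3⟩
  · exact fun x hx => (Finset.mem_filter.1 hx).2

lemma inv_point {n : ℕ} {π : Perm (Fin n)} (h : π = π⁻¹) : ∀ x, π (π x) = x := by
  intro x
  have hp : ∀ y, π y = π⁻¹ y := fun y => by rw [← h]
  rw [hp (π x), Perm.inv_apply_self]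

lemma point_inv {n : ℕ} {π : Perm (Fin n)} (h : ∀ x, π (π x) = x) : π = π⁻¹ := by
  ext x
  have : π⁻¹ (π (π x)) = π⁻¹ x := by rw [h]
  rw [Perm.inv_apply_self] at this
  exact congrArg Fin.val this

section Glue
variable {m k l : ℕ}

def gf (π : Perm (Fin m)) (β : Perm (Fin k)) : Fin (m+k) → Fin (m+k) := fun x =>
  if h : (x : ℕ) < m then ⟨(π ⟨x, h⟩ : Fin m), by omega⟩
  else ⟨m + (β ⟨(x : ℕ) - m, by omega⟩ : Fin k), by omega⟩

lemma gf_lt (π : Perm (Fin m)) (β : Perm (Fin k)) (x : Fin (m+k)) (h : (x:ℕ) < m) :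
    (gf π β x : ℕ) = (π ⟨x, h⟩ : ℕ) := by
  simp only [gf]; rw [dif_pos h]

lemma gf_ge (π : Perm (Fin m)) (β : Perm (Fin k)) (x : Fin (m+k)) (h : ¬ (x:ℕ) < m) :
    (gf π β x : ℕ) = m + (β ⟨(x:ℕ) - m, by omega⟩ : ℕ) := by
  simp only [gf]; rw [dif_neg h]

lemma gf_gf (π π' : Perm (Fin m)) (β β' : Perm (Fin k))
    (hπ : ∀ i, π' (π i) = i) (hβ : ∀ i, β' (β i) = i) (x : Fin (m+k)) :
    gf π' β' (gf π β x) = x := by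
  apply Fin.ext
  by_cases h : (x : ℕ) < m
  · have e1 := gf_lt π β x h
    have h2 : (gf π β x : ℕ) < m := by rw [e1]; exact (π ⟨x, h⟩).isLt
    rw [gf_lt π' β' _ h2]
    have : (⟨(gf π β x : ℕ), h2⟩ : Fin m) = π ⟨x, h⟩ := Fin.ext e1
    rw [this, hπ]
  · have e1 := gf_ge π β x h
    have h2 : ¬ (gf π β x : ℕ) < m := by omega
    rw [gf_ge π' β' _ h2]
    have : (⟨(gf π β x : ℕ) - m, by omega⟩ : Fin k) = β ⟨(x:ℕ) - m, by omega⟩ := by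
      apply Fin.ext; simp [e1]
    rw [this, hβ]
    simp; omega

/-- Append a block permutation `β` after `π`. -/
def glue (π : Perm (Fin m)) (β : Perm (Fin k)) : Perm (Fin (m + k)) :=
  ⟨gf π β, gf π⁻¹ β⁻¹,
    gf_gf π π⁻¹ β β⁻¹ (fun i => Perm.inv_apply_self π i) (fun i => Perm.inv_apply_self β i),
    gf_gf π⁻¹ π β⁻¹ β (fun i => Perm.apply_inv_self π i) (fun i => Perm.apply_inv_self β i)⟩

lemma glue_lt (π : Perm (Fin m)) (β : Perm (Fin k)) (x : Fin (m+k)) (h : (x:ℕ) < m) :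
    (glue π β x : ℕ) = (π ⟨x, h⟩ : ℕ) := gf_lt π β x h

lemma glue_ge (π : Perm (Fin m)) (β : Perm (Fin k)) (x : Fin (m+k)) (h : ¬ (x:ℕ) < m) :
    (glue π β x : ℕ) = m + (β ⟨(x:ℕ) - m, by omega⟩ : ℕ) := gf_ge π β x h

lemma glue_inv (π : Perm (Fin m)) (β : Perm (Fin k)) : (glue π β)⁻¹ = glue π⁻¹ β⁻¹ := rfl

lemma pres_inv {π : Perm (Fin (m+k))} (h : ∀ x : Fin (m+k), (x:ℕ) < m ↔ (π x : ℕ) < m) :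
    ∀ x : Fin (m+k), (x:ℕ) < m ↔ (π⁻¹ x : ℕ) < m := by
  intro x
  constructor
  · intro hx
    have := (h (π⁻¹ x)).2
    rw [Perm.apply_inv_self] at this
    exact this hx
  · intro hx
    have := (h (π⁻¹ x)).1 hx
    rwa [Perm.apply_inv_self] at this

def rf (π : Perm (Fin (m+k))) (h : ∀ x : Fin (m+k), (x:ℕ) < m ↔ (π x : ℕ) < m) :
    Fin m → Fin m := fun i =>
  ⟨(π ⟨i, by omega⟩ : Fin (m+k)), (h _).1 i.2⟩

lemma rf_rf (π : Perm (Fin (m+k))) (h) (i : Fin m) : rf π⁻¹ (pres_inv h) (rf π h i) = i := by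
  apply Fin.ext
  show (π⁻¹ (π ⟨i, _⟩) : ℕ) = i
  rw [Perm.inv_apply_self]

lemma rf_rf' (π : Perm (Fin (m+k))) (h) (i : Fin m) : rf π h (rf π⁻¹ (pres_inv h) i) = i := by
  apply Fin.ext
  show (π (π⁻¹ ⟨i, _⟩) : ℕ) = i
  rw [Perm.apply_inv_self]

/-- Restrict a permutation preserving the first `m` positions. -/
def restrict (π : Perm (Fin (m+k))) (h : ∀ x : Fin (m+k), (x:ℕ) < m ↔ (π x : ℕ) < m) :
    Perm (Fin m) :=
  ⟨rf π h, rf π⁻¹ (pres_inv h), rf_rf π h, rf_rf' π h⟩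

lemma restrict_val (π : Perm (Fin (m+k))) (h) (i : Fin m) :
    (restrict π h i : ℕ) = (π ⟨(i:ℕ), by omega⟩ : ℕ) := rfl

lemma contains_restrict (π : Perm (Fin (m+k))) (h) (σ : Fin l → ℕ)
    (hc : ContainsPat (restrict π h) σ) : ContainsPat π σ := by
  obtain ⟨f, mono, hp⟩ := hc
  refine ⟨fun a => ⟨(f a : ℕ), by omega⟩, ?_, ?_⟩
  · intro a b hab
    have := mono hab
    rw [Fin.lt_def] at this ⊢
    exact this
  · intro a b
    rw [hp a b, Fin.lt_def, Fin.lt_def, restrict_val, restrict_val]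

lemma contains_glue (π : Perm (Fin m)) (β : Perm (Fin k)) (σ : Fin l → ℕ) (hl : 0 < l)
    (hmax : ∀ a : Fin l, a ≠ ⟨0, hl⟩ → σ a < σ ⟨0, hl⟩)
    (hc : ContainsPat (glue π β) σ) : ContainsPat π σ ∨ ContainsPat β σ := by
  obtain ⟨f, mono, hp⟩ := hc
  set z : Fin l := ⟨0, hl⟩ with hzdef
  have hz : ∀ a : Fin l, a ≠ z → (glue π β (f a) : ℕ) < (glue π β (f z) : ℕ) := by
    intro a ha
    have := (hp a z).1 (hmax a ha)
    rwa [Fin.lt_def] at this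
  by_cases h0 : (f z : ℕ) < m
  · left
    have hall : ∀ a, (f a : ℕ) < m := by
      intro a
      by_cases ha : a = z
      · rw [ha]; exact h0
      · by_contra hge
        have e := glue_ge π β (f a) hge
        have e0 := glue_lt π β (f z) h0
        have hv := (π ⟨(f z : ℕ), h0⟩).isLt
        have := hz a ha
        omega
    refine ⟨fun a => ⟨(f a : ℕ), hall a⟩, ?_, ?_⟩
    · intro a b hab
      have := mono hab
      rw [Fin.lt_def] at this ⊢
      exact this
    · intro a b
      rw [hp a b, Fin.lt_def, Fin.lt_def, glue_lt π β _ (hall a), glue_lt π β _ (hall b)]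
  · right
    have hall : ∀ a, ¬ (f a : ℕ) < m := by
      intro a
      by_cases ha : a = z
      · rw [ha]; exact h0
      · intro hlt
        have hza : z < a := by
          rw [Fin.lt_def]
          have : (a : ℕ) ≠ 0 := fun hh => ha (Fin.ext (by simp [hzdef, hh]))
          simp [hzdef]; omega
        have := mono hza
        rw [Fin.lt_def] at this
        omega
    refine ⟨fun a => ⟨(f a : ℕ) - m, by have := (f a).isLt; omega⟩, ?_, ?_⟩
    · intro a b hab
      have := mono hab
      rw [Fin.lt_def] at this ⊢
      have := hall a
      simp; omega
    · intro a b
      rw [hp a b, Fin.lt_def, Fin.lt_def, glue_ge π β _ (hall a), glue_ge π β _ (hall b),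
        Nat.add_lt_add_iff_left]

end Glue

section PatHelp
variable {n : ℕ} (π : Perm (Fin n))

lemma mem321 {a b c : Fin n} (hab : a < b) (hbc : b < c)
    (v1 : π b < π a) (v2 : π c < π b) : ContainsPat π ![3,2,1] := by
  refine ⟨![a,b,c], ?_, ?_⟩
  · have h : ∀ i j : Fin 3, i < j → ![a,b,c] i < ![a,b,c] j := by
      simp only [Fin.forall_fin_succ, IsEmpty.forall_iff, Matrix.cons_val_zero,
        Matrix.cons_val_succ, Fin.lt_def, and_true]
      rw [Fin.lt_def] at hab hbc
      simp only [Fin.val_succ, Fin.val_zero]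
      omega
    exact fun i j hij => h i j hij
  · have v3 : π c < π a := lt_trans v2 v1
    simp only [Fin.forall_fin_succ, IsEmpty.forall_iff, Matrix.cons_val_zero,
      Matrix.cons_val_succ, Fin.lt_def, and_true]
    rw [Fin.lt_def] at v1 v2 v3
    omega

lemma mem4123 {a b c d : Fin n} (hab : a < b) (hbc : b < c) (hcd : c < d)
    (v1 : π b < π c) (v2 : π c < π d) (v3 : π d < π a) : ContainsPat π ![4,1,2,3] := by
  refine ⟨![a,b,c,d], ?_, ?_⟩
  · have h : ∀ i j : Fin 4, i < j → ![a,b,c,d] i < ![a,b,c,d] j := by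
      simp only [Fin.forall_fin_succ, IsEmpty.forall_iff, Matrix.cons_val_zero,
        Matrix.cons_val_succ, Fin.lt_def, and_true]
      rw [Fin.lt_def] at hab hbc hcd
      simp only [Fin.val_succ, Fin.val_zero]
      omega
    exact fun i j hij => h i j hij
  · simp only [Fin.forall_fin_succ, IsEmpty.forall_iff, Matrix.cons_val_zero,
      Matrix.cons_val_succ, Fin.lt_def, and_true]
    rw [Fin.lt_def] at v1 v2 v3
    omega

end PatHelp

/-! ### Structure theorems -/

section Claims
variable {n : ℕ} {π : Perm (Fin n)}

lemma claimA (hn : 4 ≤ n) (hPp : Pp π) : n - 3 ≤ (π ⟨n-1, by omega⟩ : ℕ) := by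
  obtain ⟨hinv', A321, A4123⟩ := hPp
  have hinv := inv_point hinv'
  obtain ⟨L, hL⟩ : ∃ L : Fin n, (L:ℕ) = n-1 := ⟨⟨n-1, by omega⟩, rfl⟩
  have eL : (⟨n-1, by omega⟩ : Fin n) = L := Fin.ext hL.symm
  rw [eL]
  by_contra hlt
  push_neg at hlt
  have hVval : (π L : ℕ) ≤ n - 4 := by omega
  have hVL : π (π L) = L := hinv L
  have hVLv : (π (π L) : ℕ) = n - 1 := by rw [hVL]; omega
  have step1 : ∀ r : Fin n, (π L:ℕ) < (r:ℕ) → (r:ℕ) < n-1 → (π r:ℕ) < (π L:ℕ) := by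
    intro r h1 h2
    by_contra hge
    push_neg at hge
    have k1 : (π r : ℕ) ≠ (π L : ℕ) := by
      intro he
      have : r = L := π.injective (Fin.ext he)
      rw [this] at h2; omega
    have k2 : (π r : ℕ) ≠ n-1 := by
      intro he
      have : r = π L := π.injective (Fin.ext (by omega))
      rw [this] at h1; omega
    have k3 := (π r).isLt
    refine A321 (mem321 π (a := π L) (b := r) (c := L) ?_ ?_ ?_ ?_) <;> rw [Fin.lt_def] <;> omega
  obtain ⟨p, hp⟩ : ∃ p : Fin n, (p:ℕ) = (π L:ℕ)+1 := ⟨⟨_, by omega⟩, rfl⟩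
  obtain ⟨q, hq⟩ : ∃ q : Fin n, (q:ℕ) = (π L:ℕ)+2 := ⟨⟨_, by omega⟩, rfl⟩
  have ha : (π p : ℕ) < (π L : ℕ) := step1 p (by omega) (by omega)
  have hb : (π q : ℕ) < (π L : ℕ) := step1 q (by omega) (by omega)
  have hne : (π p : ℕ) ≠ (π q : ℕ) := by
    intro he
    have : p = q := π.injective (Fin.ext he)
    rw [this] at hp; omega
  rcases lt_or_gt_of_ne hne with hcase | hcase
  · refine A4123 (mem4123 π (a := π L) (b := p) (c := q) (d := L) ?_ ?_ ?_ ?_ ?_ ?_) <;>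
      rw [Fin.lt_def] <;> omega
  · refine A321 (mem321 π (a := π L) (b := p) (c := q) ?_ ?_ ?_ ?_) <;>
      rw [Fin.lt_def] <;> omega

lemma claimB (hn : 5 ≤ n) (hPp : Pp π) (hv : (π ⟨n-1, by omega⟩ : ℕ) = n-3) :
    (π ⟨n-2, by omega⟩ : ℕ) = n-4 := by
  obtain ⟨hinv', A321, A4123⟩ := hPp
  have hinv := inv_point hinv'
  obtain ⟨L, hL⟩ : ∃ L : Fin n, (L:ℕ) = n-1 := ⟨⟨n-1, by omega⟩, rfl⟩
  obtain ⟨T, hT⟩ : ∃ T : Fin n, (T:ℕ) = n-2 := ⟨⟨n-2, by omega⟩, rfl⟩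
  have eL : (⟨n-1, by omega⟩ : Fin n) = L := Fin.ext hL.symm
  have eT : (⟨n-2, by omega⟩ : Fin n) = T := Fin.ext hT.symm
  rw [eL] at hv
  rw [eT]
  have hCL : π (π L) = L := hinv L
  have hCLv : (π (π L) : ℕ) = n-1 := by rw [hCL]; omega
  have k1 : (π T : ℕ) ≠ n-1 := by
    intro he
    have : T = π L := π.injective (by rw [hCL]; exact Fin.ext (by omega))
    have := congrArg Fin.val this
    omega
  have k2 : (π T : ℕ) ≠ n-3 := by
    intro he
    have : T = L := π.injective (Fin.ext (by omega))
    have := congrArg Fin.val this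
    omega
  have k3 : (π T : ℕ) ≠ n-2 := by
    intro he
    have hfix : (π T : ℕ) = (T : ℕ) := by omega
    refine A321 (mem321 π (a := π L) (b := T) (c := L) ?_ ?_ ?_ ?_) <;> rw [Fin.lt_def] <;> omega
  have k4 := (π T).isLt
  by_contra hne4
  have hw : (π T : ℕ) ≤ n - 5 := by omega
  have hWT : π (π T) = T := hinv T
  have hWTv : (π (π T) : ℕ) = n-2 := by rw [hWT]; omega
  obtain ⟨p, hp⟩ : ∃ p : Fin n, (p:ℕ) = (π T:ℕ)+1 := ⟨⟨_, by omega⟩, rfl⟩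
  have step : (π p : ℕ) < (π T : ℕ) := by
    by_contra hge
    push_neg at hge
    have ne1 : (π p : ℕ) ≠ (π T : ℕ) := by
      intro he
      have : p = T := π.injective (Fin.ext he)
      rw [this] at hp; omega
    have ne2 : (π p : ℕ) ≠ n-2 := by
      intro he
      have : p = π T := π.injective (by rw [hWT]; exact Fin.ext (by omega))
      have := congrArg Fin.val this
      omega
    have ne3 : (π p : ℕ) ≠ n-1 := by
      intro he
      have : p = π L := π.injective (by rw [hCL]; exact Fin.ext (by omega))
      have := congrArg Fin.val this
      omega
    have ne4 := (π p).isLt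
    refine A321 (mem321 π (a := π T) (b := p) (c := T) ?_ ?_ ?_ ?_) <;> rw [Fin.lt_def] <;> omega
  refine A4123 (mem4123 π (a := π T) (b := p) (c := T) (d := L) ?_ ?_ ?_ ?_ ?_ ?_) <;>
    rw [Fin.lt_def] <;> omega

end Claims

/-! ### Blocks and counting -/

def b1 : Perm (Fin 1) := 1
def b2 : Perm (Fin 2) := Equiv.swap 0 1
def b4 : Perm (Fin 4) := Equiv.swap 0 2 * Equiv.swap 1 3

set_option maxRecDepth 40000 in
lemma Pp_b1 : Pp b1 := by decide
set_option maxRecDepth 40000 in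
lemma Pp_b2 : Pp b2 := by decide
set_option maxRecDepth 40000 in
lemma Pp_b4 : Pp b4 := by decide

lemma hmax321 : ∀ a : Fin 3, a ≠ ⟨0, by omega⟩ →
    (![3,2,1] : Fin 3 → ℕ) a < ![3,2,1] ⟨0, by omega⟩ := by decide

lemma hmax4123 : ∀ a : Fin 4, a ≠ ⟨0, by omega⟩ →
    (![4,1,2,3] : Fin 4 → ℕ) a < ![4,1,2,3] ⟨0, by omega⟩ := by decide

lemma Pp_glue {m k : ℕ} {π : Perm (Fin m)} {β : Perm (Fin k)} (hπ : Pp π) (hβ : Pp β) :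
    Pp (glue π β) := by
  refine ⟨?_, ?_, ?_⟩
  · rw [glue_inv, ← hπ.1, ← hβ.1]
  · intro hc
    rcases contains_glue π β _ (by omega) hmax321 hc with h | h
    exacts [hπ.2.1 h, hβ.2.1 h]
  · intro hc
    rcases contains_glue π β _ (by omega) hmax4123 hc with h | h
    exacts [hπ.2.2 h, hβ.2.2 h]

lemma Pp_restrict {m k : ℕ} {π : Perm (Fin (m+k))} (hπ : Pp π) (h) :
    Pp (restrict (m := m) (k := k) π h) := by
  have hinv := inv_point hπ.1
  refine ⟨point_inv ?_, ?_, ?_⟩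
  · intro i
    apply Fin.ext
    rw [restrict_val]
    have e : (⟨(restrict π h i : ℕ), by omega⟩ : Fin (m+k)) = π ⟨(i:ℕ), by omega⟩ :=
      Fin.ext (restrict_val π h i)
    have e2 := congrArg (fun z => (π z : ℕ)) e
    exact e2.trans (congrArg Fin.val (hinv ⟨(i:ℕ), by omega⟩))
  · exact fun hc => hπ.2.1 (contains_restrict π h _ hc)
  · exact fun hc => hπ.2.2 (contains_restrict π h _ hc)

lemma block_pres {m k : ℕ} (π : Perm (Fin (m+k))) (β : Perm (Fin k))
    (hb : ∀ t : Fin k, (π ⟨m + (t:ℕ), by omega⟩ : ℕ) = m + (β t : ℕ)) :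
    ∀ x : Fin (m+k), (x:ℕ) < m ↔ (π x:ℕ) < m := by
  intro x
  constructor
  · intro hx
    by_contra hge
    push_neg at hge
    have h1 : (π x : ℕ) - m < k := by have := (π x).isLt; omega
    have hb' := hb (β⁻¹ ⟨(π x:ℕ) - m, h1⟩)
    rw [Perm.apply_inv_self] at hb'
    have hval : ((⟨(π x:ℕ) - m, h1⟩ : Fin k) : ℕ) = (π x:ℕ) - m := rfl
    have heq : π ⟨m + ((β⁻¹ ⟨(π x:ℕ) - m, h1⟩ : Fin k) : ℕ), by omega⟩ = π x :=
      Fin.ext (by omega)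
    have := congrArg Fin.val (π.injective heq)
    simp only [Fin.val_mk] at this
    omega
  · intro hpx
    by_contra hge
    push_neg at hge
    have h1 : (x:ℕ) - m < k := by have := x.isLt; omega
    have hb' := hb ⟨(x:ℕ) - m, h1⟩
    have heq : (⟨m + ((⟨(x:ℕ) - m, h1⟩ : Fin k) : ℕ), by omega⟩ : Fin (m+k)) = x :=
      Fin.ext (show m + ((x:ℕ) - m) = (x:ℕ) by omega)
    rw [heq] at hb'
    omega

lemma block_eq {m k : ℕ} (π : Perm (Fin (m+k))) (β : Perm (Fin k))
    (hb : ∀ t : Fin k, (π ⟨m + (t:ℕ), by omega⟩ : ℕ) = m + (β t : ℕ)) :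
    π = glue (restrict π (block_pres π β hb)) β := by
  apply Equiv.ext
  intro x
  apply Fin.ext
  by_cases hx : (x:ℕ) < m
  · rw [glue_lt _ _ _ hx, restrict_val]
  · rw [glue_ge _ _ _ hx]
    have h1 : (x:ℕ) - m < k := by have := x.isLt; omega
    have hb' := hb ⟨(x:ℕ) - m, h1⟩
    have heq : (⟨m + ((⟨(x:ℕ) - m, h1⟩ : Fin k) : ℕ), by omega⟩ : Fin (m+k)) = x :=
      Fin.ext (show m + ((x:ℕ) - m) = (x:ℕ) by omega)
    rw [heq] at hb'
    exact hb'

lemma glue_block_val {m k : ℕ} (π : Perm (Fin m)) (β : Perm (Fin k)) (t : Fin k) :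
    (glue π β ⟨m + (t:ℕ), by omega⟩ : ℕ) = m + (β t : ℕ) := by
  rw [glue_ge _ _ _ (show ¬ ((⟨m + (t:ℕ), by omega⟩ : Fin (m+k)) : ℕ) < m by
    show ¬ m + (t:ℕ) < m; omega)]
  simp only [Fin.val_mk]
  have e : (⟨m + (t:ℕ) - m, by omega⟩ : Fin k) = t :=
    Fin.ext (show m + (t:ℕ) - m = (t:ℕ) by omega)
  rw [e]

lemma card_block {m k : ℕ} (hk : 0 < k) (β : Perm (Fin k)) (hβ : Pp β)
    (hB : ∀ π : Perm (Fin (m+k)), Pp π →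
      (π ⟨m + ((⟨k-1, by omega⟩ : Fin k):ℕ), by omega⟩ : ℕ) = m + (β ⟨k-1, by omega⟩ : ℕ) →
      ∀ t : Fin k, (π ⟨m + (t:ℕ), by omega⟩ : ℕ) = m + (β t : ℕ)) :
    (Finset.univ.filter (fun π : Perm (Fin (m+k)) =>
        Pp π ∧ (π ⟨m + ((⟨k-1, by omega⟩ : Fin k):ℕ), by omega⟩ : ℕ)
          = m + (β ⟨k-1, by omega⟩ : ℕ))).card = j m := by
  rw [jeq]
  refine Finset.card_bij'
    (fun π hπ => restrict π (block_pres π β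
      (hB π (Finset.mem_filter.1 hπ).2.1 (Finset.mem_filter.1 hπ).2.2)))
    (fun π' _ => glue π' β) ?_ ?_ ?_ ?_
  · intro π hπ
    rw [Finset.mem_filter]
    exact ⟨Finset.mem_univ _, Pp_restrict (Finset.mem_filter.1 hπ).2.1 _⟩
  · intro π' hπ'
    rw [Finset.mem_filter]
    refine ⟨Finset.mem_univ _, Pp_glue (Finset.mem_filter.1 hπ').2 hβ, ?_⟩
    exact glue_block_val π' β ⟨k-1, by omega⟩
  · intro π hπ
    exact (block_eq π β (hB π (Finset.mem_filter.1 hπ).2.1 (Finset.mem_filter.1 hπ).2.2)).symm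
  · intro π' hπ'
    apply Equiv.ext
    intro i
    apply Fin.ext
    rw [restrict_val]
    have hx : ((⟨(i:ℕ), by omega⟩ : Fin (m+k)) : ℕ) < m := i.2
    rw [glue_lt _ _ _ hx]

/-! ### The three block-determination lemmas -/

lemma hB1 {m : ℕ} (π : Perm (Fin (m+1))) (_hP : Pp π) (hL : (π ⟨m, by omega⟩ : ℕ) = m) :
    ∀ t : Fin 1, (π ⟨m + (t:ℕ), by omega⟩ : ℕ) = m + (b1 t : ℕ) := by
  intro t
  have ht : (t:ℕ) = 0 := by omega
  have e : (⟨m + (t:ℕ), by omega⟩ : Fin (m+1)) = ⟨m, by omega⟩ :=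
    Fin.ext (show m + (t:ℕ) = m by omega)
  rw [e, hL]
  have hb : (b1 t : ℕ) = (t:ℕ) := rfl
  omega

lemma hB2 {m : ℕ} (π : Perm (Fin (m+2))) (hP : Pp π) (hL : (π ⟨m+1, by omega⟩ : ℕ) = m) :
    ∀ t : Fin 2, (π ⟨m + (t:ℕ), by omega⟩ : ℕ) = m + (b2 t : ℕ) := by
  have hinv := inv_point hP.1
  obtain ⟨x0, hx0⟩ : ∃ x : Fin (m+2), (x:ℕ) = m := ⟨⟨m, by omega⟩, rfl⟩
  obtain ⟨x1, hx1⟩ : ∃ x : Fin (m+2), (x:ℕ) = m+1 := ⟨⟨m+1, by omega⟩, rfl⟩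
  have eL : (⟨m+1, by omega⟩ : Fin (m+2)) = x1 := Fin.ext (show m+1 = (x1:ℕ) by omega)
  rw [eL] at hL
  have h0 : π x1 = x0 := Fin.ext (by omega)
  have h1 : π x0 = x1 := by rw [← h0, hinv]
  intro t
  have ht : (t:ℕ) = 0 ∨ (t:ℕ) = 1 := by omega
  rcases ht with ht | ht
  · have et : t = ⟨0, by decide⟩ := Fin.ext ht
    have hbv : (b2 t : ℕ) = 1 := by rw [et]; decide
    have e : (⟨m + (t:ℕ), by omega⟩ : Fin (m+2)) = x0 :=
      Fin.ext (show m + (t:ℕ) = (x0:ℕ) by omega)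
    rw [e, h1]
    omega
  · have et : t = ⟨1, by decide⟩ := Fin.ext ht
    have hbv : (b2 t : ℕ) = 0 := by rw [et]; decide
    have e : (⟨m + (t:ℕ), by omega⟩ : Fin (m+2)) = x1 :=
      Fin.ext (show m + (t:ℕ) = (x1:ℕ) by omega)
    rw [e, h0]
    omega

lemma hB4 {m : ℕ} (hm : 1 ≤ m) (π : Perm (Fin (m+4))) (hP : Pp π)
    (hL : (π ⟨m+3, by omega⟩ : ℕ) = m+1) :
    ∀ t : Fin 4, (π ⟨m + (t:ℕ), by omega⟩ : ℕ) = m + (b4 t : ℕ) := by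
  have hinv := inv_point hP.1
  obtain ⟨x0, hx0⟩ : ∃ x : Fin (m+4), (x:ℕ) = m := ⟨⟨m, by omega⟩, rfl⟩
  obtain ⟨x1, hx1⟩ : ∃ x : Fin (m+4), (x:ℕ) = m+1 := ⟨⟨m+1, by omega⟩, rfl⟩
  obtain ⟨x2, hx2⟩ : ∃ x : Fin (m+4), (x:ℕ) = m+2 := ⟨⟨m+2, by omega⟩, rfl⟩
  obtain ⟨x3, hx3⟩ : ∃ x : Fin (m+4), (x:ℕ) = m+3 := ⟨⟨m+3, by omega⟩, rfl⟩
  have eL : (⟨m+3, by omega⟩ : Fin (m+4)) = x3 := Fin.ext (show m+3 = (x3:ℕ) by omega)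
  rw [eL] at hL
  have hTx : (π x2 : ℕ) = m := by
    have hL' : (π ⟨(m+4)-1, by omega⟩ : ℕ) = (m+4)-3 := by
      have e : (⟨(m+4)-1, by omega⟩ : Fin (m+4)) = x3 :=
        Fin.ext (show (m+4)-1 = (x3:ℕ) by omega)
      rw [e, hL]
      omega
    have hT := claimB (n := m+4) (by omega) hP hL'
    have e : (⟨(m+4)-2, by omega⟩ : Fin (m+4)) = x2 :=
      Fin.ext (show (m+4)-2 = (x2:ℕ) by omega)
    rw [e] at hT
    omega
  have f3 : π x3 = x1 := Fin.ext (by omega)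
  have f2 : π x2 = x0 := Fin.ext (by omega)
  have f1 : π x1 = x3 := by rw [← f3, hinv]
  have f0 : π x0 = x2 := by rw [← f2, hinv]
  intro t
  have ht : (t:ℕ) = 0 ∨ (t:ℕ) = 1 ∨ (t:ℕ) = 2 ∨ (t:ℕ) = 3 := by omega
  rcases ht with ht | ht | ht | ht
  · have et : t = ⟨0, by decide⟩ := Fin.ext ht
    have hbv : (b4 t : ℕ) = 2 := by rw [et]; decide
    have e : (⟨m + (t:ℕ), by omega⟩ : Fin (m+4)) = x0 :=
      Fin.ext (show m + (t:ℕ) = (x0:ℕ) by omega)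
    rw [e, f0]
    omega
  · have et : t = ⟨1, by decide⟩ := Fin.ext ht
    have hbv : (b4 t : ℕ) = 3 := by rw [et]; decide
    have e : (⟨m + (t:ℕ), by omega⟩ : Fin (m+4)) = x1 :=
      Fin.ext (show m + (t:ℕ) = (x1:ℕ) by omega)
    rw [e, f1]
    omega
  · have et : t = ⟨2, by decide⟩ := Fin.ext ht
    have hbv : (b4 t : ℕ) = 0 := by rw [et]; decide
    have e : (⟨m + (t:ℕ), by omega⟩ : Fin (m+4)) = x2 :=
      Fin.ext (show m + (t:ℕ) = (x2:ℕ) by omega)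
    rw [e, f2]
    omega
  · have et : t = ⟨3, by decide⟩ := Fin.ext ht
    have hbv : (b4 t : ℕ) = 1 := by rw [et]; decide
    have e : (⟨m + (t:ℕ), by omega⟩ : Fin (m+4)) = x3 :=
      Fin.ext (show m + (t:ℕ) = (x3:ℕ) by omega)
    rw [e, f3]
    omega

/-! ### The recurrence -/

lemma key (m : ℕ) : j (m+5) = j (m+4) + j (m+3) + j (m+1) := by
  classical
  have hcases : ∀ π : Perm (Fin (m+5)), Pp π →
      (π ⟨m+4, by omega⟩ : ℕ) = m+4 ∨ (π ⟨m+4, by omega⟩ : ℕ) = m+3 ∨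
      (π ⟨m+4, by omega⟩ : ℕ) = m+2 := by
    intro π hP
    have hA := claimA (n := m+5) (by omega) hP
    have e : (⟨(m+5)-1, by omega⟩ : Fin (m+5)) = ⟨m+4, by omega⟩ :=
      Fin.ext (show (m+5)-1 = m+4 by omega)
    rw [e] at hA
    have := (π ⟨m+4, by omega⟩).isLt
    omega
  have hsplit : (Finset.univ.filter (fun π : Perm (Fin (m+5)) => Pp π)) =
      (Finset.univ.filter (fun π : Perm (Fin (m+5)) =>
        Pp π ∧ (π ⟨m+4, by omega⟩ : ℕ) = m+4)) ∪
      ((Finset.univ.filter (fun π : Perm (Fin (m+5)) =>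
        Pp π ∧ (π ⟨m+4, by omega⟩ : ℕ) = m+3)) ∪
      (Finset.univ.filter (fun π : Perm (Fin (m+5)) =>
        Pp π ∧ (π ⟨m+4, by omega⟩ : ℕ) = m+2))) := by
    ext π
    simp only [Finset.mem_filter, Finset.mem_union, Finset.mem_univ, true_and]
    constructor
    · intro hP
      rcases hcases π hP with h | h | h
      · exact Or.inl ⟨hP, h⟩
      · exact Or.inr (Or.inl ⟨hP, h⟩)
      · exact Or.inr (Or.inr ⟨hP, h⟩)
    · rintro (⟨h, _⟩ | ⟨h, _⟩ | ⟨h, _⟩) <;> exact h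
  have d1 : Disjoint
      (Finset.univ.filter (fun π : Perm (Fin (m+5)) =>
        Pp π ∧ (π ⟨m+4, by omega⟩ : ℕ) = m+3))
      (Finset.univ.filter (fun π : Perm (Fin (m+5)) =>
        Pp π ∧ (π ⟨m+4, by omega⟩ : ℕ) = m+2)) := by
    rw [Finset.disjoint_left]
    intro π h1 h2
    simp only [Finset.mem_filter] at h1 h2
    omega
  have d2 : Disjoint
      (Finset.univ.filter (fun π : Perm (Fin (m+5)) =>
        Pp π ∧ (π ⟨m+4, by omega⟩ : ℕ) = m+4))
      ((Finset.univ.filter (fun π : Perm (Fin (m+5)) =>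
        Pp π ∧ (π ⟨m+4, by omega⟩ : ℕ) = m+3)) ∪
      (Finset.univ.filter (fun π : Perm (Fin (m+5)) =>
        Pp π ∧ (π ⟨m+4, by omega⟩ : ℕ) = m+2))) := by
    rw [Finset.disjoint_left]
    intro π h1 h2
    simp only [Finset.mem_filter, Finset.mem_union] at h1 h2
    rcases h2 with h2 | h2 <;> omega
  have e1 : (Finset.univ.filter (fun π : Perm (Fin (m+5)) =>
      Pp π ∧ (π ⟨m+4, by omega⟩ : ℕ) = m+4)).card = j (m+4) :=
    card_block (m := m+4) (k := 1) (by omega) b1 Pp_b1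
      (fun π hP hL => hB1 π hP hL)
  have e2 : (Finset.univ.filter (fun π : Perm (Fin (m+5)) =>
      Pp π ∧ (π ⟨m+4, by omega⟩ : ℕ) = m+3)).card = j (m+3) :=
    card_block (m := m+3) (k := 2) (by omega) b2 Pp_b2
      (fun π hP hL => hB2 π hP hL)
  have e3 : (Finset.univ.filter (fun π : Perm (Fin (m+5)) =>
      Pp π ∧ (π ⟨m+4, by omega⟩ : ℕ) = m+2)).card = j (m+1) :=
    card_block (m := m+1) (k := 4) (by omega) b4 Pp_b4
      (fun π hP hL => hB4 (by omega) π hP hL)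
  rw [jeq (m+5), hsplit, Finset.card_union_of_disjoint d2, Finset.card_union_of_disjoint d1,
    e1, e2, e3, Nat.add_assoc]

set_option maxRecDepth 100000 in
theorem statement19 :
    j 1 = 1 ∧ j 2 = 2 ∧ j 3 = 3 ∧ j 4 = 6 ∧
      ∀ n : ℕ, 5 ≤ n → j n = j (n - 1) + j (n - 2) + j (n - 4) := by
  refine ⟨?_, ?_, ?_, ?_, ?_⟩
  · rw [jeq]; decide
  · rw [jeq]; decide
  · rw [jeq]; decide
  · rw [jeq]; decide
  · intro n hn
    obtain ⟨m, rfl⟩ : ∃ m, n = m + 5 := ⟨n - 5, by omega⟩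
    have h1 : m + 5 - 1 = m + 4 := by omega
    have h2 : m + 5 - 2 = m + 3 := by omega
    have h4 : m + 5 - 4 = m + 1 := by omega
    rw [h1, h2, h4]
    exact key m
end
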